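/- arXiv:1601.00390 — 7 statements merged into one kernel-verified Lean document; each statement's English description precedes it below -/
import Mathlib

section
/- Let f : ℝ^{m×n} → ℝ be convex, let Ω ⊂ ℝⁿ be a bounded open set, let A ∈ ℝ^{m×n}, and let φ : ℝⁿ → ℝ^m be a Lipschitz map vanishing outside Ω. Then f(A)·|Ω| ≤ ∫_Ω f(A + ∇φ(x)) dx. (In other words, every convex function on matrices is quasiconvex.) -/
open MeasureTheory Filter Topology Metric Bornology
open scoped ENNReal NNReal

noncomputable section

/-- The (a.e.-defined) gradient of a map `u : ℝⁿ → ℝᵐ`, identified with an `m × n` matrix: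
its `(i,j)` entry is the `i`-th component of the Fréchet derivative applied to the `j`-th
standard basis vector. -/
def grad {n m : ℕ} (u : EuclideanSpace ℝ (Fin n) → EuclideanSpace ℝ (Fin m))
    (x : EuclideanSpace ℝ (Fin n)) : Matrix (Fin m) (Fin n) ℝ :=
  Matrix.of fun i j => fderiv ℝ u x (EuclideanSpace.single j 1) i

/-- A coordinate of a vector in Euclidean space is bounded by the norm. -/
lemma abs_coord_le_norm {m : ℕ} (u : EuclideanSpace ℝ (Fin m)) (i : Fin m) :
    |u i| ≤ ‖u‖ := by
  rw [EuclideanSpace.norm_eq, ← Real.sqrt_sq_eq_abs]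
  apply Real.sqrt_le_sqrt
  simp only [Real.norm_eq_abs, sq_abs]
  exact Finset.single_le_sum (f := fun j => u j ^ 2) (fun j _ => sq_nonneg _)
    (Finset.mem_univ i)

/-- The integral over all of `ℝⁿ` of a directional derivative of a compactly supported
Lipschitz function vanishes. -/
lemma integral_lineDeriv_eq_zero {n : ℕ} {u : EuclideanSpace ℝ (Fin n) → ℝ} {K : ℝ≥0}
    (hu : LipschitzWith K u) (h'u : HasCompactSupport u) (v : EuclideanSpace ℝ (Fin n)) :
    ∫ x, lineDeriv ℝ u x v = 0 := by
  have h := LipschitzWith.integral_lineDeriv_mul_eq (μ := volume)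
    (LipschitzWith.const (b := (1:ℝ))) hu h'u (-v)
  have hz : ∀ x : EuclideanSpace ℝ (Fin n), lineDeriv ℝ (fun _ => (1:ℝ)) x (-v) = 0 := by
    intro x; simp [lineDeriv]
  simp only [hz, zero_mul, integral_zero, neg_neg, mul_one] at h
  exact h.symm

/-- A Lipschitz function vanishing on a set has vanishing derivative a.e. on that set. -/
lemma fderiv_ae_zero_on_zero_set {n : ℕ} {S : Set (EuclideanSpace ℝ (Fin n))}
    (hSm : MeasurableSet S) {u : EuclideanSpace ℝ (Fin n) → ℝ} {K : ℝ≥0}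
    (hu : LipschitzWith K u) (hS : ∀ x ∈ S, u x = 0) :
    ∀ᵐ x ∂(volume.restrict S), fderiv ℝ u x = 0 := by
  have hdiff : ∀ᵐ x ∂(volume.restrict S), DifferentiableAt ℝ u x :=
    ae_restrict_of_ae hu.ae_differentiableAt
  have hdens := ae_all_iff.2
    (fun k : ℕ => IsUnifLocDoublingMeasure.ae_tendsto_measure_inter_div
      (μ := (volume : Measure (EuclideanSpace ℝ (Fin n)))) S (k : ℝ))
  filter_upwards [hdiff, hdens, ae_restrict_mem hSm] with x hx hd hxS
  ext v
  simp only [ContinuousLinearMap.zero_apply]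
  by_contra hLv
  set L := fderiv ℝ u x with hL
  have hv : v ≠ 0 := by
    intro h
    exact hLv (by simp [h])
  have hvn : (0:ℝ) < ‖v‖ := norm_pos_iff.2 hv
  set a := |L v| with ha
  have hapos : 0 < a := abs_pos.2 hLv
  have hK0 : (0:ℝ) ≤ (K:ℝ) := K.coe_nonneg
  set ε := a / (2 * ((K:ℝ) + 1)) with hε
  have hεpos : 0 < ε := by positivity
  set c := a / (4 * ‖v‖) with hc
  have hcpos : 0 < c := by positivity
  have hKε : (K:ℝ) * ε ≤ a / 2 := by
    rw [hε, mul_div_assoc']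
    rw [div_le_div_iff₀ (by positivity) (by norm_num)]
    nlinarith
  -- little-o estimate along the direction v
  have hlittle : ∀ᶠ t : ℝ in 𝓝 0,
      ‖u (x + t • v) - u x - L (t • v)‖ ≤ c * ‖t • v‖ := by
    have h1 := (hasFDerivAt_iff_isLittleO_nhds_zero.1 hx.hasFDerivAt).def hcpos
    have h2 : Filter.Tendsto (fun t : ℝ => t • v) (𝓝 0) (𝓝 0) := by
      have : Filter.Tendsto (fun t : ℝ => t • v) (𝓝 0) (𝓝 ((0:ℝ) • v)) :=
        (continuous_id.smul (continuous_const (y := v))).tendsto (0:ℝ)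
      rwa [zero_smul] at this
    exact h2.eventually h1
  obtain ⟨t₀, ht₀pos, ht₀⟩ := Metric.eventually_nhds_iff.1 hlittle
  -- the balls around x + t v of radius ε t avoid S
  have hempty : ∀ t : ℝ, 0 < t → t < t₀ →
      S ∩ closedBall (x + t • v) (ε * t) = ∅ := by
    intro t ht htv
    rw [Set.eq_empty_iff_forall_notMem]
    rintro y ⟨hyS, hyB⟩
    have hux : u x = 0 := hS x hxS
    have huy : u y = 0 := hS y hyS
    have hnorm : ‖t • v‖ = t * ‖v‖ := by
      rw [norm_smul, Real.norm_eq_abs, abs_of_pos ht]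
    have happrox : ‖u (x + t • v) - u x - L (t • v)‖ ≤ c * ‖t • v‖ := by
      apply ht₀
      rw [dist_zero_right, Real.norm_eq_abs, abs_of_pos ht]
      exact htv
    have hLa : |L (t • v)| = t * a := by
      have hsm : L (t • v) = t * L v := by
        rw [ContinuousLinearMap.map_smul, smul_eq_mul]
      rw [hsm, abs_mul, abs_of_pos ht]
    have hlow : t * a - c * (t * ‖v‖) ≤ |u (x + t • v)| := by
      have habs : |L (t • v)| ≤ |u (x + t • v)| + |u (x + t • v) - u x - L (t • v)| := by
        have heq : L (t • v) = u (x + t • v) - (u (x + t • v) - u x - L (t • v)) := by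
          rw [hux]; ring
        calc |L (t • v)| = |u (x + t • v) - (u (x + t • v) - u x - L (t • v))| := by rw [← heq]
          _ ≤ |u (x + t • v)| + |u (x + t • v) - u x - L (t • v)| := abs_sub _ _
      rw [hLa] at habs
      rw [Real.norm_eq_abs, hnorm] at happrox
      linarith
    have hup : |u (x + t • v)| ≤ (K:ℝ) * (ε * t) := by
      have h1 := hu.dist_le_mul (x + t • v) y
      rw [Real.dist_eq, huy, sub_zero] at h1
      have h2 : dist (x + t • v) y ≤ ε * t := by
        rw [dist_comm]; exact hyB
      calc |u (x + t • v)| ≤ (K:ℝ) * dist (x + t • v) y := h1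
        _ ≤ (K:ℝ) * (ε * t) := by gcongr
    have hceq : c * (t * ‖v‖) = a * t / 4 := by
      rw [hc]; field_simp
    have hKεt : (K:ℝ) * (ε * t) ≤ a / 2 * t := by
      rw [← mul_assoc]
      exact mul_le_mul_of_nonneg_right hKε ht.le
    nlinarith
  -- derive the contradiction with the density theorem
  set k := ⌈‖v‖ / ε⌉₊ with hk
  have hkε : ‖v‖ ≤ (k:ℝ) * ε := by
    have h1 := Nat.le_ceil (‖v‖ / ε)
    calc ‖v‖ = ‖v‖ / ε * ε := by field_simp
      _ ≤ (k:ℝ) * ε := mul_le_mul_of_nonneg_right h1 hεpos.le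
  set w : ℕ → EuclideanSpace ℝ (Fin n) := fun j => x + (1/((j:ℝ)+1)) • v with hw
  set δ : ℕ → ℝ := fun j => ε * (1/((j:ℝ)+1)) with hδ
  have hδpos : ∀ j, 0 < δ j := fun j => by positivity
  have hδlim : Tendsto δ atTop (𝓝[>] 0) := by
    rw [tendsto_nhdsWithin_iff]
    constructor
    · rw [hδ]
      have := tendsto_one_div_add_atTop_nhds_zero_nat.const_mul ε
      simpa [one_div] using this
    · exact Eventually.of_forall fun j => hδpos j
  have hmem : ∀ j, x ∈ closedBall (w j) ((k:ℝ) * δ j) := by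
    intro j
    rw [mem_closedBall, hw, dist_self_add_right, norm_smul, Real.norm_eq_abs,
      abs_of_pos (by positivity : (0:ℝ) < 1/((j:ℝ)+1))]
    calc 1/((j:ℝ)+1) * ‖v‖ ≤ 1/((j:ℝ)+1) * ((k:ℝ) * ε) := by
          apply mul_le_mul_of_nonneg_left hkε (by positivity)
      _ = (k:ℝ) * δ j := by rw [hδ]; ring
  have htend := hd k w δ hδlim (Eventually.of_forall hmem)
  have hzero_ev : ∀ᶠ j : ℕ in atTop,
      volume (S ∩ closedBall (w j) (δ j)) / volume (closedBall (w j) (δ j)) = 0 := by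
    have htv' : Tendsto (fun j : ℕ => (1/((j:ℝ)+1))) atTop (𝓝 0) :=
      tendsto_one_div_add_atTop_nhds_zero_nat
    filter_upwards [htv'.eventually_lt_const ht₀pos] with j hj
    have hem := hempty (1/((j:ℝ)+1)) (by positivity) hj
    rw [hδ]
    show volume (S ∩ closedBall (w j) (ε * (1/((j:ℝ)+1)))) / _ = 0
    rw [hw]
    show volume (S ∩ closedBall (x + (1/((j:ℝ)+1)) • v) (ε * (1/((j:ℝ)+1)))) / _ = 0
    rw [hem]
    simp
  have h0 : Tendsto (fun j : ℕ =>
      volume (S ∩ closedBall (w j) (δ j)) / volume (closedBall (w j) (δ j)))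
      atTop (𝓝 0) :=
    Tendsto.congr' (hzero_ev.mono fun j h => h.symm) tendsto_const_nhds
  exact one_ne_zero (tendsto_nhds_unique htend h0)

/-- The integral of a directional derivative of a Lipschitz function vanishing outside a
bounded open set, over that set, vanishes. -/
lemma setIntegral_fderiv_eq_zero {n : ℕ} {Ω : Set (EuclideanSpace ℝ (Fin n))}
    (hΩo : IsOpen Ω) (hΩb : Bornology.IsBounded Ω)
    {u : EuclideanSpace ℝ (Fin n) → ℝ} {K : ℝ≥0}
    (hu : LipschitzWith K u) (h0 : ∀ x ∉ Ω, u x = 0) (v : EuclideanSpace ℝ (Fin n)) :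
    ∫ x in Ω, fderiv ℝ u x v = 0 := by
  have hcs : HasCompactSupport u := HasCompactSupport.intro hΩb.isCompact_closure
    (fun x hx => h0 x (fun h => hx (subset_closure h)))
  have hzero : ∀ᵐ x ∂(volume : Measure (EuclideanSpace ℝ (Fin n))),
      x ∈ Ωᶜ → fderiv ℝ u x = 0 :=
    (ae_restrict_iff' hΩo.isClosed_compl.measurableSet).1
      (fderiv_ae_zero_on_zero_set hΩo.isClosed_compl.measurableSet hu (fun x hx => h0 x hx))
  have h1 : ∫ x in Ω, fderiv ℝ u x v =
      ∫ x, Ω.indicator (fun x => fderiv ℝ u x v) x :=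
    (integral_indicator hΩo.measurableSet).symm
  have h2 : (Ω.indicator fun x => fderiv ℝ u x v)
      =ᵐ[(volume : Measure (EuclideanSpace ℝ (Fin n)))] fun x => fderiv ℝ u x v := by
    filter_upwards [hzero] with x hx
    by_cases hxΩ : x ∈ Ω
    · simp [Set.indicator_of_mem hxΩ]
    · simp [Set.indicator_of_notMem hxΩ, hx hxΩ]
  have h3 : (fun x => fderiv ℝ u x v)
      =ᵐ[(volume : Measure (EuclideanSpace ℝ (Fin n)))] fun x => lineDeriv ℝ u x v := by
    filter_upwards [hu.ae_differentiableAt] with x hx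
    exact hx.lineDeriv_eq_fderiv.symm
  rw [h1, integral_congr_ae (h2.trans h3), integral_lineDeriv_eq_zero hu hcs v]

/-- Every convex function on `m × n` matrices is quasiconvex: for every bounded open set
`Ω ⊆ ℝⁿ`, every matrix `A` and every Lipschitz map `φ : ℝⁿ → ℝᵐ` vanishing outside `Ω`,
`f(A)·|Ω| ≤ ∫_Ω f(A + ∇φ)`. -/
theorem stmt0 {m n : ℕ} (f : Matrix (Fin m) (Fin n) ℝ → ℝ)
    (hf : ConvexOn ℝ Set.univ f)
    (Ω : Set (EuclideanSpace ℝ (Fin n))) (hΩo : IsOpen Ω) (hΩb : Bornology.IsBounded Ω)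
    (A : Matrix (Fin m) (Fin n) ℝ)
    (φ : EuclideanSpace ℝ (Fin n) → EuclideanSpace ℝ (Fin m))
    (K : ℝ≥0) (hφ : LipschitzWith K φ)
    (hφ0 : ∀ x ∉ Ω, φ x = 0) :
    f A * (volume Ω).toReal ≤ ∫ x in Ω, f (A + grad φ x) := by
  classical
  by_cases hvol : volume Ω = 0
  · rw [Measure.restrict_eq_zero.mpr hvol]
    simp [hvol]
  set μ := (volume : Measure (EuclideanSpace ℝ (Fin n))).restrict Ω with hμ
  have hfin : μ Set.univ < ⊤ := by
    rw [hμ, Measure.restrict_apply_univ]; exact hΩb.measure_lt_top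
  haveI : IsFiniteMeasure μ := ⟨hfin⟩
  haveI : NeZero μ := ⟨fun h => hvol (Measure.restrict_eq_zero.1 h)⟩
  set F : (Fin m → Fin n → ℝ) → ℝ := fun w => f (Matrix.of w) with hF
  set g : EuclideanSpace ℝ (Fin n) → (Fin m → Fin n → ℝ) :=
    fun x i j => A i j + fderiv ℝ φ x (EuclideanSpace.single j 1) i with hg
  have hFA : ConvexOn ℝ (Set.univ : Set (Fin m → Fin n → ℝ)) F := hf
  have hFc : Continuous F := by
    have := hFA.continuousOn isOpen_univ
    exact continuousOn_univ.1 this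
  -- measurability of g
  have hgm : Measurable g := by
    apply measurable_pi_lambda
    intro i
    apply measurable_pi_lambda
    intro j
    apply Measurable.add measurable_const
    exact (measurable_pi_apply i).comp ((WithLp.measurable_ofLp 2 _).comp
      (measurable_fderiv_apply_const ℝ φ (EuclideanSpace.single j 1)))
  -- bound on g
  set AW : (Fin m → Fin n → ℝ) := fun i j => A i j with hAW
  set R : ℝ := ‖AW‖ + K with hR
  have hentry : ∀ (x : EuclideanSpace ℝ (Fin n)) (i : Fin m) (j : Fin n),
      |fderiv ℝ φ x (EuclideanSpace.single j 1) i| ≤ (K:ℝ) := by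
    intro x i j
    calc |fderiv ℝ φ x (EuclideanSpace.single j 1) i|
        ≤ ‖fderiv ℝ φ x (EuclideanSpace.single j 1)‖ :=
          abs_coord_le_norm _ i
      _ ≤ ‖fderiv ℝ φ x‖ * ‖EuclideanSpace.single j (1:ℝ)‖ :=
          (fderiv ℝ φ x).le_opNorm _
      _ = ‖fderiv ℝ φ x‖ := by rw [EuclideanSpace.norm_single]; simp
      _ ≤ (K:ℝ) := norm_fderiv_le_of_lipschitz ℝ hφ
  have hbound : ∀ x : EuclideanSpace ℝ (Fin n), ‖g x‖ ≤ R := by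
    intro x
    have hR0 : (0:ℝ) ≤ R := by
      rw [hR]; positivity
    rw [pi_norm_le_iff_of_nonneg hR0]
    intro i
    rw [pi_norm_le_iff_of_nonneg hR0]
    intro j
    have h1 : |A i j| ≤ ‖AW‖ := by
      calc |A i j| = ‖AW i j‖ := rfl
        _ ≤ ‖AW i‖ := norm_le_pi_norm (AW i) j
        _ ≤ ‖AW‖ := norm_le_pi_norm AW i
    calc ‖g x i j‖ = |A i j + fderiv ℝ φ x (EuclideanSpace.single j 1) i| := rfl
      _ ≤ |A i j| + |fderiv ℝ φ x (EuclideanSpace.single j 1) i| := abs_add_le _ _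
      _ ≤ ‖AW‖ + K := add_le_add h1 (hentry x i j)
      _ = R := rfl
  have hgi : Integrable g μ :=
    ⟨hgm.aestronglyMeasurable, HasFiniteIntegral.of_bounded (ae_of_all _ hbound)⟩
  have hgiF : Integrable (F ∘ g) μ := by
    obtain ⟨C, hC⟩ := (isCompact_closedBall (0:(Fin m → Fin n → ℝ)) R).exists_bound_of_continuousOn
      hFc.continuousOn
    refine ⟨(hFc.measurable.comp hgm).aestronglyMeasurable,
      HasFiniteIntegral.of_bounded (C := C) (ae_of_all _ fun x => ?_)⟩
    exact hC (g x) (by simpa [mem_closedBall, dist_zero_right] using hbound x)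
  -- Jensen's inequality
  have hjensen := hFA.map_average_le hFc.continuousOn isClosed_univ
    (ae_of_all _ fun _ => Set.mem_univ _) hgi hgiF
  -- compute the average of g
  have hcomp : ∀ (i : Fin m) (j : Fin n), ∫ x, g x i j ∂μ = (volume Ω).toReal * A i j := by
    intro i j
    have hD : Integrable (fun x => fderiv ℝ φ x (EuclideanSpace.single j 1) i) μ := by
      refine ⟨((measurable_pi_apply i).comp ((WithLp.measurable_ofLp 2 _).comp
        (measurable_fderiv_apply_const ℝ φ (EuclideanSpace.single j 1)))).aestronglyMeasurable,
        HasFiniteIntegral.of_bounded (C := (K:ℝ)) (ae_of_all _ fun x => ?_)⟩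
      exact hentry x i j
    have hsplit : ∫ x, g x i j ∂μ = (∫ x, A i j ∂μ) +
        ∫ x, fderiv ℝ φ x (EuclideanSpace.single j 1) i ∂μ := by
      rw [← integral_add (integrable_const _) hD]
    have hconst : ∫ x, A i j ∂μ = (volume Ω).toReal * A i j := by
      rw [integral_const, hμ, measureReal_def, Measure.restrict_apply_univ, smul_eq_mul]
    -- the fderiv-entry integral vanishes
    have hui : LipschitzWith (‖(EuclideanSpace.proj i :
        EuclideanSpace ℝ (Fin m) →L[ℝ] ℝ)‖₊ * K) (fun y => φ y i) :=
      (EuclideanSpace.proj i : EuclideanSpace ℝ (Fin m) →L[ℝ] ℝ).lipschitz.comp hφ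
    have hae : (fun x => fderiv ℝ φ x (EuclideanSpace.single j 1) i)
        =ᵐ[(volume : Measure (EuclideanSpace ℝ (Fin n)))]
        fun x => fderiv ℝ (fun y => φ y i) x (EuclideanSpace.single j 1) := by
      filter_upwards [hφ.ae_differentiableAt] with x hx
      have := (((EuclideanSpace.proj i : EuclideanSpace ℝ (Fin m) →L[ℝ] ℝ)).hasFDerivAt.comp x
        hx.hasFDerivAt).fderiv
      calc fderiv ℝ φ x (EuclideanSpace.single j 1) i
          = ((EuclideanSpace.proj i : EuclideanSpace ℝ (Fin m) →L[ℝ] ℝ).comp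
            (fderiv ℝ φ x)) (EuclideanSpace.single j 1) := rfl
        _ = fderiv ℝ ((EuclideanSpace.proj i : EuclideanSpace ℝ (Fin m) →L[ℝ] ℝ) ∘ φ) x
            (EuclideanSpace.single j 1) := by rw [this]
        _ = fderiv ℝ (fun y => φ y i) x (EuclideanSpace.single j 1) := rfl
    have hzero : ∫ x, fderiv ℝ φ x (EuclideanSpace.single j 1) i ∂μ = 0 := by
      rw [hμ, integral_congr_ae (ae_restrict_of_ae hae)]
      exact setIntegral_fderiv_eq_zero hΩo hΩb hui
        (fun x hx => by rw [hφ0 x hx]; rfl) (EuclideanSpace.single j 1)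
    rw [hsplit, hconst, hzero, add_zero]
  have hIg : ∫ x, g x ∂μ = (volume Ω).toReal • AW := by
    funext i j
    let Lij : (Fin m → Fin n → ℝ) →L[ℝ] ℝ :=
      (ContinuousLinearMap.proj (R := ℝ) (φ := fun _ : Fin n => ℝ) j).comp
        (ContinuousLinearMap.proj (R := ℝ) (φ := fun _ : Fin m => (Fin n → ℝ)) i)
    have hL := ContinuousLinearMap.integral_comp_comm Lij hgi
    calc (∫ x, g x ∂μ) i j
        = Lij (∫ x, g x ∂μ) := rfl
      _ = ∫ x, Lij (g x) ∂μ := hL.symm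
      _ = ∫ x, g x i j ∂μ := rfl
      _ = (volume Ω).toReal * A i j := hcomp i j
      _ = ((volume Ω).toReal • AW) i j := rfl
  set V := (volume Ω).toReal with hV
  have hVpos : 0 < V := ENNReal.toReal_pos hvol hΩb.measure_lt_top.ne
  have havg : ⨍ x, g x ∂μ = AW := by
    rw [average_eq, hIg, hμ, measureReal_def, Measure.restrict_apply_univ, smul_smul, ← hV,
      inv_mul_cancel₀ hVpos.ne', one_smul]
  have hFAW : F AW = f A := rfl
  rw [havg, hFAW, average_eq, hμ, measureReal_def, Measure.restrict_apply_univ, ← hV, smul_eq_mul] at hjensen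
  have hgoal : ∫ x in Ω, f (A + grad φ x) = ∫ x, F (g x) ∂μ := rfl
  rw [hgoal]
  calc f A * V ≤ V⁻¹ * (∫ x, F (g x) ∂μ) * V := by
        apply mul_le_mul_of_nonneg_right _ hVpos.le
        exact hjensen
    _ = ∫ x, F (g x) ∂μ := by field_simp
end
end

section
/- Define I(u) := ∫₀¹ (1 − u′(x)²)² + u(x)² dx for Lipschitz functions u : [0,1] → ℝ, where u′ is the almost-everywhere defined derivative. Let Y := { u : [0,1] → ℝ Lipschitz : |u′(x)| ≤ 1 for a.e. x, u(0) = u(1) = 0 }. Then inf_{u ∈ Y} I(u) = 0, while I(u) > 0 for every u ∈ Y; in particular the infimum of I over Y is not attained. (The infimum is realized along the zig-zag sequence u_k(x) := k⁻¹ u(kx), where u is the 1-periodic extension of the hat function equal to x on [0,1/2] and to 1−x on [1/2,1].) -/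
open MeasureTheory Filter Topology
open scoped ENNReal NNReal

noncomputable section

/-- The functional `I(u) = ∫₀¹ (1 - u'(x)²)² + u(x)² dx`, where `u'` is the
(a.e.-defined) derivative of the Lipschitz function `u`. -/
def I1 (u : ℝ → ℝ) : ℝ :=
  ∫ x in Set.Icc (0:ℝ) 1, ((1 - (deriv u x) ^ 2) ^ 2 + (u x) ^ 2)

/-- The admissible class `Y`: Lipschitz functions on `[0,1]` with `|u'| ≤ 1` a.e. and
`u(0) = u(1) = 0`. -/
def Y : Set (ℝ → ℝ) :=
  {u | (∃ K : ℝ≥0, LipschitzWith K u) ∧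
       (∀ᵐ x ∂(volume.restrict (Set.Icc (0:ℝ) 1)), |deriv u x| ≤ 1) ∧
       u 0 = 0 ∧ u 1 = 0}

namespace Stmt1Aux

/-- distance to the nearest integer -/
def hat (x : ℝ) : ℝ := Metric.infDist x (Set.range ((↑) : ℤ → ℝ))

lemma hat_lip : LipschitzWith 1 hat := Metric.lipschitz_infDist_pt _

lemma round_eq_of_abs_lt {z : ℝ} {m : ℤ} (h : |z - m| < 1/2) : round z = m := by
  rw [round_eq, Int.floor_eq_iff]
  rw [abs_lt] at h
  constructor <;> push_cast <;> linarith

lemma hat_eq (x : ℝ) : hat x = |x - round x| := by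
  have hne : (Set.range ((↑) : ℤ → ℝ)).Nonempty := ⟨(0:ℤ), ⟨0, rfl⟩⟩
  unfold hat
  apply le_antisymm
  · have := Metric.infDist_le_dist_of_mem (x := x)
      (y := ((round x : ℤ) : ℝ)) (Set.mem_range_self (round x))
    rwa [Real.dist_eq] at this
  · refine le_of_not_gt fun hlt => ?_
    rw [Metric.infDist_lt_iff hne] at hlt
    obtain ⟨y, ⟨m, rfl⟩, hy⟩ := hlt
    rw [Real.dist_eq] at hy
    have h1 : |x - round x| ≤ 1/2 := abs_sub_round x
    by_cases hm : m = round x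
    · subst hm; exact lt_irrefl _ hy
    · have hint : (1:ℝ) ≤ |(round x : ℝ) - m| := by
        have hne0 : round x - m ≠ 0 := sub_ne_zero.mpr (fun h => hm h.symm)
        have := Int.one_le_abs hne0
        calc (1:ℝ) ≤ |(round x - m : ℤ)| := by exact_mod_cast this
        _ = |(round x : ℝ) - m| := by push_cast; ring_nf
      have h2 : |(round x : ℝ) - m| ≤ |x - round x| + |x - m| := by
        calc |(round x : ℝ) - m| = |(x - m) - (x - round x)| := by ring_nf
        _ ≤ |x - m| + |x - (round x:ℝ)| := abs_sub _ _
        _ = |x - round x| + |x - m| := by rw [add_comm]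
      linarith

lemma hat_nonneg (x : ℝ) : 0 ≤ hat x := Metric.infDist_nonneg

lemma hat_le_half (x : ℝ) : hat x ≤ 1/2 := by rw [hat_eq]; exact abs_sub_round x

lemma hat_int (m : ℤ) : hat m = 0 := Metric.infDist_zero_of_mem ⟨m, rfl⟩

lemma hat_hasDerivAt {x : ℝ} (h : ∀ n : ℤ, (2:ℝ) * x ≠ n) :
    ∃ d : ℝ, HasDerivAt hat d x ∧ d ^ 2 = 1 := by
  set m := round x with hm
  have h1 : |x - m| ≤ 1/2 := abs_sub_round x
  have hne : x - m ≠ 0 := by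
    intro h0
    have hx : x = (m : ℝ) := by linarith [sub_eq_zero.mp h0]
    exact h (2*m) (by push_cast [hx]; ring)
  have hhalf : |x - m| ≠ 1/2 := by
    intro h0
    rcases (abs_eq (by norm_num : (0:ℝ) ≤ 1/2)).mp h0 with h0 | h0
    · exact h (2*m+1) (by push_cast; linarith)
    · exact h (2*m-1) (by push_cast; linarith)
  have hlt : |x - m| < 1/2 := lt_of_le_of_ne h1 hhalf
  have habs : ∀ y : ℝ, |y - m| < 1/2 → hat y = |y - m| := by
    intro y hy
    rw [hat_eq, round_eq_of_abs_lt hy]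
  rcases hne.lt_or_gt with hneg | hpos
  · -- x < m : locally hat y = m - y
    refine ⟨-1, ?_, by norm_num⟩
    have hev : hat =ᶠ[𝓝 x] fun y => (m:ℝ) - y := by
      have hδ : 0 < min (1/2 - |x - m|) ((m:ℝ) - x) := lt_min (by linarith) (by linarith)
      filter_upwards [Metric.ball_mem_nhds x hδ] with y hy
      rw [Metric.mem_ball, Real.dist_eq] at hy
      have hy1 : |y - x| < 1/2 - |x - m| := lt_of_lt_of_le hy (min_le_left _ _)
      have hy2 : |y - x| < m - x := lt_of_lt_of_le hy (min_le_right _ _)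
      have hym : |y - m| < 1/2 := by
        calc |y - m| = |(y - x) + (x - m)| := by ring_nf
        _ ≤ |y - x| + |x - m| := abs_add_le _ _
        _ < 1/2 := by linarith
      rw [habs y hym]
      have : y - m < 0 := by
        have := abs_lt.mp hy2
        linarith
      rw [abs_of_neg this]; ring
    exact hev.hasDerivAt_iff.mpr ((hasDerivAt_id x).const_sub (m:ℝ))
  · refine ⟨1, ?_, by norm_num⟩
    have hev : hat =ᶠ[𝓝 x] fun y => y - (m:ℝ) := by
      have hδ : 0 < min (1/2 - |x - m|) (x - (m:ℝ)) := lt_min (by linarith) (by linarith)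
      filter_upwards [Metric.ball_mem_nhds x hδ] with y hy
      rw [Metric.mem_ball, Real.dist_eq] at hy
      have hy1 : |y - x| < 1/2 - |x - m| := lt_of_lt_of_le hy (min_le_left _ _)
      have hy2 : |y - x| < x - m := lt_of_lt_of_le hy (min_le_right _ _)
      have hym : |y - m| < 1/2 := by
        calc |y - m| = |(y - x) + (x - m)| := by ring_nf
        _ ≤ |y - x| + |x - m| := abs_add_le _ _
        _ < 1/2 := by linarith
      rw [habs y hym]
      have : 0 < y - m := by
        have := abs_lt.mp hy2
        linarith
      rw [abs_of_pos this]
    exact hev.hasDerivAt_iff.mpr ((hasDerivAt_id x).sub_const (m:ℝ))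

/-- the zig-zag sequence -/
def uk (k : ℕ) (x : ℝ) : ℝ := hat ((k+1 : ℝ) * x) / (k+1 : ℝ)

lemma uk_lip (k : ℕ) : LipschitzWith 1 (uk k) := by
  have hc : (0:ℝ) < (k+1 : ℝ) := by positivity
  apply LipschitzWith.of_dist_le_mul
  intro x y
  rw [Real.dist_eq, Real.dist_eq, NNReal.coe_one, one_mul]
  have hl := hat_lip.dist_le_mul ((k+1:ℝ)*x) ((k+1:ℝ)*y)
  rw [Real.dist_eq, Real.dist_eq, NNReal.coe_one, one_mul] at hl
  unfold uk
  calc |hat ((k+1:ℝ)*x)/(k+1:ℝ) - hat ((k+1:ℝ)*y)/(k+1:ℝ)|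
      = |hat ((k+1:ℝ)*x) - hat ((k+1:ℝ)*y)| / (k+1:ℝ) := by
        rw [div_sub_div_same, abs_div, abs_of_pos hc]
    _ ≤ |(k+1:ℝ)*x - (k+1:ℝ)*y| / (k+1:ℝ) := by gcongr
    _ = |x - y| := by
        rw [← mul_sub, abs_mul, abs_of_pos hc]
        field_simp



lemma uk_mem (k : ℕ) : uk k ∈ Y := by
  refine ⟨⟨1, uk_lip k⟩, ?_, ?_, ?_⟩
  · refine Eventually.of_forall fun x => ?_
    have := norm_deriv_le_of_lipschitz (x₀ := x) (uk_lip k)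
    simpa [Real.norm_eq_abs] using this
  · show hat ((k+1 : ℝ) * 0) / (k+1 : ℝ) = 0
    rw [mul_zero, show (0:ℝ) = ((0:ℤ):ℝ) by norm_num, hat_int]
    simp
  · show hat ((k+1 : ℝ) * 1) / (k+1 : ℝ) = 0
    rw [mul_one, show ((k:ℝ)+1) = (((k:ℤ)+1 : ℤ):ℝ) by push_cast; ring, hat_int]
    simp

lemma I1_uk_le (k : ℕ) : I1 (uk k) ≤ 1/(k+1 : ℝ) := by
  set c : ℝ := (k+1 : ℝ) with hcdef
  have hc : 0 < c := by positivity
  have hc1 : 1 ≤ c := by rw [hcdef]; push_cast; linarith [Nat.cast_nonneg (α := ℝ) k]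
  have hE : volume {x : ℝ | ∃ n : ℤ, 2 * (c * x) = n} = 0 := by
    apply measure_mono_null (t := ⋃ n : ℤ, {(n : ℝ)/(2*c)})
    · rintro x ⟨n, hn⟩
      refine Set.mem_iUnion.mpr ⟨n, ?_⟩
      simp only [Set.mem_singleton_iff]
      field_simp
      linarith
    · exact measure_iUnion_null fun n => measure_singleton _
  have hderiv : ∀ x : ℝ, x ∉ {x : ℝ | ∃ n : ℤ, 2 * (c * x) = n} →
      (deriv (uk k) x)^2 = 1 := by
    intro x hx
    obtain ⟨d, hd, hd2⟩ := hat_hasDerivAt (x := c * x) (fun n hn => hx ⟨n, hn⟩)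
    have h2 : HasDerivAt (fun y : ℝ => c * y) c x := by
      simpa using (hasDerivAt_id x).const_mul c
    have h1 : HasDerivAt (fun y => hat (c * y)) (d * c) x := hd.comp x h2
    have h3 : HasDerivAt (uk k) (d * c / c) x := h1.div_const c
    rw [h3.deriv]
    have : d * c / c = d := by field_simp
    rw [this, hd2]
  have hcongr : ∀ᵐ x ∂(volume.restrict (Set.Icc (0:ℝ) 1)),
      (1 - (deriv (uk k) x)^2)^2 + (uk k x)^2 = (uk k x)^2 := by
    apply ae_restrict_of_ae
    filter_upwards [measure_eq_zero_iff_ae_notMem.mp hE] with x hx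
    rw [hderiv x hx]
    ring
  have hcontu : Continuous (uk k) := (uk_lip k).continuous
  have hint1 : IntegrableOn (fun x => (uk k x)^2) (Set.Icc (0:ℝ) 1) volume :=
    ((hcontu.pow 2).continuousOn).integrableOn_Icc
  have hμ : volume (Set.Icc (0:ℝ) 1) < ⊤ := by
    rw [Real.volume_Icc]; norm_num
  calc I1 (uk k) = ∫ x in Set.Icc (0:ℝ) 1, (uk k x)^2 := integral_congr_ae hcongr
    _ ≤ ∫ _x in Set.Icc (0:ℝ) 1, (1/(2*c))^2 := by
        refine setIntegral_mono_on hint1 (integrableOn_const hμ.ne)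
          measurableSet_Icc fun x _hx => ?_
        have h1 : 0 ≤ uk k x := div_nonneg (hat_nonneg _) hc.le
        have h2 : uk k x ≤ 1/(2*c) := by
          show hat (c * x) / c ≤ 1/(2*c)
          rw [div_le_div_iff₀ hc (by positivity)]
          have := hat_le_half (c * x)
          nlinarith
        nlinarith
    _ = (1/(2*c))^2 := by
        rw [setIntegral_const, Real.volume_real_Icc]
        simp
    _ ≤ 1/c := by
        rw [div_pow, one_pow, div_le_div_iff₀ (by positivity) hc]
        nlinarith


lemma I1_pos {u : ℝ → ℝ} (hu : u ∈ Y) : 0 < I1 u := by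
  obtain ⟨⟨K, hK⟩, _hd, h0, h1⟩ := hu
  set g : ℝ → ℝ := fun x => (1 - (deriv u x)^2)^2 + (u x)^2 with hg
  have hcont : Continuous u := hK.continuous
  have hnn : ∀ x, 0 ≤ g x := fun x => add_nonneg (sq_nonneg _) (sq_nonneg _)
  have hge : 0 ≤ I1 u := integral_nonneg hnn
  rcases hge.lt_or_eq with h | h
  · exact h
  exfalso
  have hmble : AEStronglyMeasurable g volume := by
    apply Measurable.aestronglyMeasurable
    exact ((measurable_const.sub ((measurable_deriv u).pow_const 2)).pow_const 2).add
      (hcont.measurable.pow_const 2)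
  have hdK : ∀ x : ℝ, |deriv u x| ≤ (K:ℝ) := fun x => by
    have := norm_deriv_le_of_lipschitz (x₀ := x) hK
    simpa [Real.norm_eq_abs] using this
  have hbound : ∀ᵐ x ∂(volume.restrict (Set.Icc (0:ℝ) 1)),
      ‖g x‖ ≤ (1 + (K:ℝ)^2)^2 + (K:ℝ)^2 := by
    filter_upwards [ae_restrict_mem measurableSet_Icc] with x hx
    have hux : |u x| ≤ (K:ℝ) := by
      have hd := hK.dist_le_mul x 0
      rw [Real.dist_eq, Real.dist_eq] at hd
      have hx1 : |x - 0| ≤ 1 := by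
        rw [sub_zero, abs_of_nonneg hx.1]; exact hx.2
      calc |u x| = |u x - u 0| := by rw [h0, sub_zero]
      _ ≤ K * |x - 0| := hd
      _ ≤ K * 1 := by
          exact mul_le_mul_of_nonneg_left hx1 K.coe_nonneg
      _ = K := mul_one _
    have h2 : (deriv u x)^2 ≤ (K:ℝ)^2 := by
      rw [← sq_abs]; exact pow_le_pow_left₀ (abs_nonneg _) (hdK x) 2
    have h3 : (u x)^2 ≤ (K:ℝ)^2 := by
      rw [← sq_abs]; exact pow_le_pow_left₀ (abs_nonneg _) hux 2
    rw [Real.norm_eq_abs, abs_of_nonneg (hnn x)]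
    simp only [g]
    nlinarith [sq_nonneg (deriv u x), sq_nonneg ((K:ℝ)^2 - (deriv u x)^2)]
  have hμ : volume (Set.Icc (0:ℝ) 1) ≠ ∞ := by
    rw [Real.volume_Icc]; norm_num
  have hint : IntegrableOn g (Set.Icc (0:ℝ) 1) volume :=
    Measure.integrableOn_of_bounded hμ hmble hbound
  have hzero : g =ᵐ[volume.restrict (Set.Icc (0:ℝ) 1)] 0 :=
    (integral_eq_zero_iff_of_nonneg_ae (Eventually.of_forall hnn) hint).mp h.symm
  have hu0 : u =ᵐ[volume.restrict (Set.Icc (0:ℝ) 1)] fun _ => 0 := by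
    filter_upwards [hzero] with x hx
    simp only [g, Pi.zero_apply] at hx
    have hle : (u x)^2 ≤ 0 := by nlinarith [sq_nonneg (1 - (deriv u x)^2)]
    have : (u x)^2 = 0 := le_antisymm hle (sq_nonneg _)
    exact pow_eq_zero_iff two_ne_zero |>.mp this
  have heqOn : Set.EqOn u (fun _ => 0) (Set.Icc (0:ℝ) 1) :=
    Measure.eqOn_Icc_of_ae_eq volume (by norm_num : (0:ℝ) ≠ 1) hu0
      hcont.continuousOn continuousOn_const
  have hderiv0 : ∀ x ∈ Set.Ioo (0:ℝ) 1, deriv u x = 0 := by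
    intro x hx
    have hev : u =ᶠ[𝓝 x] fun _ => (0:ℝ) := by
      filter_upwards [isOpen_Ioo.mem_nhds hx] with y hy
      exact heqOn (Set.Ioo_subset_Icc_self hy)
    rw [hev.deriv_eq]
    exact deriv_const x 0
  have key : ∀ a : ℝ, (volume.restrict (Set.Icc (0:ℝ) 1)) {a} = 0 := fun a => by
    rw [Measure.restrict_apply (measurableSet_singleton a)]
    exact measure_mono_null Set.inter_subset_left (measure_singleton a)
  have hne0 : ∀ᵐ x ∂(volume.restrict (Set.Icc (0:ℝ) 1)), x ≠ 0 := by
    rw [ae_iff]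
    convert key 0 using 2
    ext y; simp
  have hne1 : ∀ᵐ x ∂(volume.restrict (Set.Icc (0:ℝ) 1)), x ≠ 1 := by
    rw [ae_iff]
    convert key 1 using 2
    ext y; simp
  have hrne : (volume.restrict (Set.Icc (0:ℝ) 1)) ≠ 0 := by
    intro hz
    have : (volume.restrict (Set.Icc (0:ℝ) 1)) Set.univ = 0 := by rw [hz]; rfl
    rw [Measure.restrict_apply_univ, Real.volume_Icc] at this
    norm_num at this
  have : (ae (volume.restrict (Set.Icc (0:ℝ) 1))).NeBot := ae_neBot.mpr hrne
  have hfalse : ∀ᵐ _x ∂(volume.restrict (Set.Icc (0:ℝ) 1)), False := by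
    filter_upwards [hzero, ae_restrict_mem measurableSet_Icc, hne0, hne1]
      with x hgx hx h0x h1x
    have hio : x ∈ Set.Ioo (0:ℝ) 1 := ⟨lt_of_le_of_ne hx.1 (Ne.symm h0x), lt_of_le_of_ne hx.2 h1x⟩
    have hd0 := hderiv0 x hio
    simp only [g, Pi.zero_apply, hd0] at hgx
    nlinarith [sq_nonneg (u x)]
  obtain ⟨x, hx⟩ := hfalse.exists
  exact hx

end Stmt1Aux

open Stmt1Aux in
/-- The infimum of `I` over `Y` is `0`, yet `I(u) > 0` for every `u ∈ Y`; in particular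
the infimum is not attained. -/
theorem stmt1 : IsGLB (I1 '' Y) 0 ∧ ∀ u ∈ Y, 0 < I1 u := by
  have hnn : ∀ u : ℝ → ℝ, 0 ≤ I1 u := fun u =>
    integral_nonneg fun x => add_nonneg (sq_nonneg _) (sq_nonneg _)
  constructor
  · constructor
    · rintro y ⟨u, _, rfl⟩
      exact hnn u
    · intro b hb
      have hle : ∀ k : ℕ, b ≤ 1/(k+1:ℝ) := fun k =>
        le_trans (hb ⟨uk k, uk_mem k, rfl⟩) (I1_uk_le k)
      exact ge_of_tendsto' tendsto_one_div_add_atTop_nhds_zero_nat hle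
  · intro u hu
    exact I1_pos hu
end
end

section
/- Let Ω ⊂ ℝⁿ be a bounded open set with Lipschitz boundary, let f : ℝ^{m×n} → ℝ be continuous and quasiconvex, and let A ∈ ℝ^{m×n}. Suppose {u_k} is a sequence of maps u_k : Ω → ℝ^m that are Lipschitz with a common Lipschitz constant and that converge uniformly on Ω to the affine map u(x) = Ax. Then f(A)·|Ω| ≤ liminf_{k→∞} ∫_Ω f(∇u_k(x)) dx. -/
open MeasureTheory Filter Topology Metric Bornology
open scoped ENNReal NNReal RealInnerProductSpace

noncomputable section

/-- A set `Ω ⊆ ℝⁿ` has Lipschitz boundary if near each boundary point, after a rotation,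
`Ω` is the region above the graph of a Lipschitz function: there are a unit direction `v`,
a radius `r > 0` and a Lipschitz function `h` (evaluated on the orthogonal complement of `v`)
such that inside the ball `B(x,r)`, membership in `Ω` is equivalent to
`h(z - ⟨z,v⟩v) < ⟨z,v⟩`. -/
def HasLipschitzBoundary {n : ℕ} (Ω : Set (EuclideanSpace ℝ (Fin n))) : Prop :=
  ∀ x ∈ frontier Ω, ∃ (v : EuclideanSpace ℝ (Fin n)) (r : ℝ) (K : ℝ≥0)
      (h : EuclideanSpace ℝ (Fin n) → ℝ), ‖v‖ = 1 ∧ 0 < r ∧ LipschitzWith K h ∧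
      ∀ z ∈ Metric.ball x r, (z ∈ Ω ↔ h (z - ⟪z, v⟫ • v) < ⟪z, v⟫)

/-- `f : ℝ^{m×n} → ℝ` is quasiconvex: for every bounded open set `D ⊆ ℝⁿ`, every matrix `A`
and every Lipschitz map `φ` vanishing outside `D`, `f(A)·|D| ≤ ∫_D f(A + ∇φ)`. -/
def QuasiconvexFn {m n : ℕ} (f : Matrix (Fin m) (Fin n) ℝ → ℝ) : Prop :=
  ∀ D : Set (EuclideanSpace ℝ (Fin n)), IsOpen D → Bornology.IsBounded D →
    ∀ (A : Matrix (Fin m) (Fin n) ℝ) (φ : EuclideanSpace ℝ (Fin n) → EuclideanSpace ℝ (Fin m)),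
      (∃ K : ℝ≥0, LipschitzWith K φ) → (∀ x ∉ D, φ x = 0) →
        f A * (volume D).toReal ≤ ∫ x in D, f (A + grad φ x)



lemma euclid_abs_apply_le_norm {m : ℕ} (w : EuclideanSpace ℝ (Fin m)) (i : Fin m) :
    |w i| ≤ ‖w‖ := by
  have := abs_real_inner_le_norm (EuclideanSpace.single i (1:ℝ)) w
  simpa [EuclideanSpace.inner_single_left, EuclideanSpace.norm_single] using this

lemma lipschitzWith_apply_euclid {m : ℕ} (i : Fin m) :
    LipschitzWith 1 (fun w : EuclideanSpace ℝ (Fin m) => w i) := by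
  apply LipschitzWith.of_dist_le_mul
  intro a b
  simpa [Real.dist_eq, dist_eq_norm] using euclid_abs_apply_le_norm (a - b) i

def matCLM {m n : ℕ} (A : Matrix (Fin m) (Fin n) ℝ) :
    EuclideanSpace ℝ (Fin n) →L[ℝ] EuclideanSpace ℝ (Fin m) :=
  LinearMap.toContinuousLinearMap
  { toFun := fun x => (WithLp.toLp 2 (fun i => ∑ j, A i j * x j) : EuclideanSpace ℝ (Fin m))
    map_add' := by
      intro x y; ext i
      show (∑ j, A i j * (x j + y j)) = (∑ j, A i j * x j) + ∑ j, A i j * y j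
      simp [mul_add, Finset.sum_add_distrib]
    map_smul' := by
      intro c x; ext i
      show (∑ j, A i j * (c * x j)) = c * ∑ j, A i j * x j
      rw [Finset.mul_sum]
      exact Finset.sum_congr rfl fun j _ => by ring }

lemma matCLM_apply {m n : ℕ} (A : Matrix (Fin m) (Fin n) ℝ) (x : EuclideanSpace ℝ (Fin n)) :
    matCLM A x = (WithLp.toLp 2 (fun i => ∑ j, A i j * x j) : EuclideanSpace ℝ (Fin m)) := rfl

lemma matCLM_single {m n : ℕ} (A : Matrix (Fin m) (Fin n) ℝ) (j : Fin n) (i : Fin m) :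
    matCLM A (EuclideanSpace.single j 1) i = A i j := by
  show (∑ j', A i j' * (EuclideanSpace.single j (1:ℝ)) j') = A i j
  simp [EuclideanSpace.single_apply, mul_ite]

lemma grad_entry_abs_le {n m : ℕ} {L : ℝ≥0}
    {v : EuclideanSpace ℝ (Fin n) → EuclideanSpace ℝ (Fin m)} (hv : LipschitzWith L v)
    (x : EuclideanSpace ℝ (Fin n)) (i : Fin m) (j : Fin n) :
    |grad v x i j| ≤ L := by
  have h1 : |grad v x i j| ≤ ‖fderiv ℝ v x (EuclideanSpace.single j 1)‖ :=
    euclid_abs_apply_le_norm _ i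
  have h2 : ‖fderiv ℝ v x (EuclideanSpace.single j 1)‖ ≤ ‖fderiv ℝ v x‖ := by
    simpa [EuclideanSpace.norm_single] using
      (fderiv ℝ v x).le_opNorm (EuclideanSpace.single j 1)
  exact h1.trans (h2.trans (norm_fderiv_le_of_lipschitz ℝ hv))

lemma measurable_f_comp {n m : ℕ} (f : Matrix (Fin m) (Fin n) ℝ → ℝ) (hf : Continuous f)
    (F : EuclideanSpace ℝ (Fin n) → Matrix (Fin m) (Fin n) ℝ)
    (hF : ∀ i j, Measurable fun x => F x i j) : Measurable fun x => f (F x) := by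
  have hof : Measurable (fun x => (fun i j => F x i j : Fin m → Fin n → ℝ)) :=
    measurable_pi_lambda _ fun i => measurable_pi_lambda _ fun j => hF i j
  have hc : Continuous (fun g : Fin m → Fin n → ℝ => f (Matrix.of g)) := hf.comp continuous_id
  exact hc.measurable.comp hof

lemma grad_entry_measurable {n m : ℕ} (v : EuclideanSpace ℝ (Fin n) → EuclideanSpace ℝ (Fin m))
    (i : Fin m) (j : Fin n) : Measurable fun x => grad v x i j :=
  ((lipschitzWith_apply_euclid i).continuous.measurable.comp
    ((ContinuousLinearMap.apply ℝ (EuclideanSpace ℝ (Fin m))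
      (EuclideanSpace.single j 1)).continuous.measurable)).comp (measurable_fderiv ℝ v)

lemma lipschitz_smul_of_bound {E F : Type*} [NormedAddCommGroup E] [NormedAddCommGroup F]
    [NormedSpace ℝ F] {ζ : E → ℝ} {g : E → F} {Lζ Lg C : ℝ≥0}
    (hζ : LipschitzWith Lζ ζ) (hg : LipschitzWith Lg g)
    (h0 : ∀ x, 0 ≤ ζ x) (h1 : ∀ x, ζ x ≤ 1)
    (hC : ∀ x, ζ x ≠ 0 → ‖g x‖ ≤ C) :
    LipschitzWith (Lg + Lζ * C) (fun x => ζ x • g x) := by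
  apply LipschitzWith.of_dist_le_mul
  intro x y
  have hd : ∀ a b : E, dist a b = ‖a - b‖ := fun a b => dist_eq_norm a b
  have hζd : |ζ x - ζ y| ≤ (Lζ : ℝ) * dist x y := by
    have := hζ.dist_le_mul x y
    rwa [Real.dist_eq] at this
  have hgd : ‖g x - g y‖ ≤ (Lg : ℝ) * dist x y := by
    have := hg.dist_le_mul x y
    rwa [dist_eq_norm] at this
  have hdist : (0:ℝ) ≤ dist x y := dist_nonneg
  rw [dist_eq_norm]
  push_cast
  by_cases hy : ζ y = 0
  · by_cases hx : ζ x = 0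
    · simp only [hx, hy, zero_smul, sub_zero, norm_zero]
      positivity
    · have hgx : ‖g x‖ ≤ (C : ℝ) := hC x hx
      have h2 : ζ x ≤ (Lζ : ℝ) * dist x y := by
        have : |ζ x - ζ y| = ζ x := by rw [hy, sub_zero, abs_of_nonneg (h0 x)]
        linarith [hζd, this.symm.le, this.le]
      calc ‖ζ x • g x - ζ y • g y‖ = ζ x * ‖g x‖ := by
            rw [hy, zero_smul, sub_zero, norm_smul, Real.norm_eq_abs, abs_of_nonneg (h0 x)]
        _ ≤ ((Lζ : ℝ) * dist x y) * C := by
            apply mul_le_mul h2 hgx (norm_nonneg _)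
            positivity
        _ ≤ ((Lg : ℝ) + Lζ * C) * dist x y := by nlinarith [Lg.coe_nonneg]
  · have hgy : ‖g y‖ ≤ (C : ℝ) := hC y hy
    calc ‖ζ x • g x - ζ y • g y‖
        = ‖ζ x • (g x - g y) + (ζ x - ζ y) • g y‖ := by
          congr 1
          rw [smul_sub, sub_smul]
          abel
      _ ≤ ‖ζ x • (g x - g y)‖ + ‖(ζ x - ζ y) • g y‖ := norm_add_le _ _
      _ = |ζ x| * ‖g x - g y‖ + |ζ x - ζ y| * ‖g y‖ := by
          rw [norm_smul, norm_smul, Real.norm_eq_abs, Real.norm_eq_abs]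
      _ ≤ 1 * ((Lg : ℝ) * dist x y) + ((Lζ : ℝ) * dist x y) * C := by
          have h3 : |ζ x| ≤ 1 := abs_le.2 ⟨by linarith [h0 x], h1 x⟩
          have h4 : (0:ℝ) ≤ |ζ x - ζ y| := abs_nonneg _
          gcongr
      _ ≤ ((Lg : ℝ) + Lζ * C) * dist x y := by nlinarith

lemma grad_local_eq {n m : ℕ} (A : Matrix (Fin m) (Fin n) ℝ)
    {v φ : EuclideanSpace ℝ (Fin n) → EuclideanSpace ℝ (Fin m)}
    {x : EuclideanSpace ℝ (Fin n)} (hdiff : DifferentiableAt ℝ v x)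
    (heq : φ =ᶠ[nhds x] fun y => v y - matCLM A y) :
    A + grad φ x = grad v x := by
  have h1 : fderiv ℝ φ x = fderiv ℝ v x - matCLM A := by
    rw [heq.fderiv_eq, fderiv_fun_sub hdiff (matCLM A).differentiableAt,
      (matCLM A).fderiv]
  funext i j
  show A i j + fderiv ℝ φ x (EuclideanSpace.single j 1) i = grad v x i j
  rw [h1, ContinuousLinearMap.sub_apply]
  have : ((fderiv ℝ v x) (EuclideanSpace.single j 1) - matCLM A (EuclideanSpace.single j 1)) i
      = (fderiv ℝ v x) (EuclideanSpace.single j 1) i - matCLM A (EuclideanSpace.single j 1) i :=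
    rfl
  rw [this, matCLM_single]
  show A i j + (grad v x i j - A i j) = grad v x i j
  ring

/-- If `f` is continuous and quasiconvex and `u_k` is a sequence of uniformly Lipschitz maps
converging uniformly on `Ω` to the affine map `x ↦ Ax`, then
`f(A)·|Ω| ≤ liminf_k ∫_Ω f(∇u_k)`. -/
theorem stmt3 {m n : ℕ} (Ω : Set (EuclideanSpace ℝ (Fin n)))
    (hΩo : IsOpen Ω) (hΩb : Bornology.IsBounded Ω) (hΩl : HasLipschitzBoundary Ω)
    (f : Matrix (Fin m) (Fin n) ℝ → ℝ) (hfc : Continuous f) (hfq : QuasiconvexFn f)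
    (A : Matrix (Fin m) (Fin n) ℝ)
    (u : ℕ → EuclideanSpace ℝ (Fin n) → EuclideanSpace ℝ (Fin m))
    (K : ℝ≥0) (hLip : ∀ k, LipschitzWith K (u k))
    (hconv : TendstoUniformlyOn u
      (fun x => (WithLp.toLp 2 (fun i => ∑ j, A i j * x j) : EuclideanSpace ℝ (Fin m))) atTop Ω) :
    f A * (volume Ω).toReal ≤
      Filter.liminf (fun k => ∫ x in Ω, f (grad (u k) x)) Filter.atTop := by

  rcases isEmpty_or_nonempty (Fin n) with hn | hn
  · -- degenerate case: `Fin n` empty, all matrices are equal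
    haveI : Subsingleton (Matrix (Fin m) (Fin n) ℝ) :=
      inferInstanceAs (Subsingleton (Fin m → Fin n → ℝ))
    have hconst : ∀ k, (∫ x in Ω, f (grad (u k) x)) = f A * (volume Ω).toReal := by
      intro k
      have h1 : ∀ x, f (grad (u k) x) = f A := fun x => congrArg f (Subsingleton.elim _ _)
      simp only [h1]
      rw [setIntegral_const, smul_eq_mul, mul_comm]
      rfl
    simp only [hconst]
    rw [liminf_const]
  -- main case
  have hcne : Ωᶜ.Nonempty := by
    rcases Set.eq_empty_or_nonempty Ωᶜ with h | h
    · exfalso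
      have hΩuniv : Ω = Set.univ := by
        rw [← Set.compl_empty_iff]; exact h
      obtain ⟨j⟩ := hn
      obtain ⟨R, hR⟩ := hΩb.subset_closedBall 0
      have hp : ((R+1) • EuclideanSpace.single j (1:ℝ)) ∈ Ω := by rw [hΩuniv]; trivial
      have := hR hp
      rw [Metric.mem_closedBall, dist_zero_right, norm_smul, EuclideanSpace.norm_single] at this
      have h2 : R + 1 ≤ |R + 1| := le_abs_self _
      simp only [Real.norm_eq_abs, norm_one, mul_one] at this
      linarith
    · exact h
  have hconv' : TendstoUniformlyOn u (⇑(matCLM A)) atTop Ω := hconv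
  set Lma : ℝ≥0 := ‖matCLM A‖₊ with hLma
  have hAabs : ∀ i j, |A i j| ≤ (Lma : ℝ) := by
    intro i j
    rw [← matCLM_single A j i]
    refine (euclid_abs_apply_le_norm _ i).trans ?_
    simpa [EuclideanSpace.norm_single, hLma] using (matCLM A).le_opNorm (EuclideanSpace.single j 1)
  -- the compact set of matrices and the bound on f
  set C₀ : ℝ := (Lma : ℝ) + ((K : ℝ) + (Lma : ℝ) + 1) with hC₀
  set S : Set (Matrix (Fin m) (Fin n) ℝ) :=
    {B : Matrix (Fin m) (Fin n) ℝ | ∀ i j, B i j ∈ Set.Icc (-C₀) C₀} with hS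
  have hScomp : IsCompact S := by
    have hSeq : S = Set.univ.pi (fun _ : Fin m => Set.univ.pi fun _ : Fin n =>
        Set.Icc (-C₀) C₀) := by
      ext B
      constructor
      · exact fun h i _ j _ => h i j
      · exact fun h i j => h i (Set.mem_univ i) j (Set.mem_univ j)
    rw [hSeq]
    exact isCompact_univ_pi fun i => isCompact_univ_pi fun j => isCompact_Icc
  obtain ⟨M, hM⟩ := hScomp.exists_bound_of_continuousOn hfc.continuousOn
  set M0 : ℝ := max M 0 with hM0
  have hM0nn : 0 ≤ M0 := le_max_right _ _
  have hMS : ∀ B ∈ S, |f B| ≤ M0 := fun B hB =>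
    le_trans (by simpa [Real.norm_eq_abs] using hM B hB) (le_max_left _ _)
  have hVfin : volume Ω < ⊤ := hΩb.measure_lt_top
  set V : ℝ := (volume Ω).toReal with hV
  -- the exhausting open sets and the cutoffs
  set U : ℕ → Set (EuclideanSpace ℝ (Fin n)) :=
    fun j => {x | 1 < ((j:ℝ)+1) * infDist x Ωᶜ} with hU
  have hUopen : ∀ j, IsOpen (U j) := by
    intro j
    exact isOpen_lt continuous_const
      (continuous_const.mul (lipschitz_infDist_pt Ωᶜ).continuous)
  have hUmeas : ∀ j, MeasurableSet (U j) := fun j => (hUopen j).measurableSet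
  have hUsub : ∀ j, U j ⊆ Ω := by
    intro j x hx
    by_contra hxΩ
    have : infDist x Ωᶜ = 0 := infDist_zero_of_mem hxΩ
    simp only [hU, Set.mem_setOf_eq, this, mul_zero] at hx
    linarith
  have hUmono : Monotone U := by
    intro a b hab x hx
    simp only [hU, Set.mem_setOf_eq] at hx ⊢
    have h1 : (0:ℝ) ≤ infDist x Ωᶜ := infDist_nonneg
    have h2 : ((a:ℝ)+1) ≤ ((b:ℝ)+1) := by exact_mod_cast by omega
    nlinarith
  have hUnion : (⋃ j, U j) = Ω := by
    apply Set.Subset.antisymm (Set.iUnion_subset hUsub)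
    intro x hx
    have hd : 0 < infDist x Ωᶜ :=
      (hΩo.isClosed_compl.notMem_iff_infDist_pos hcne).1 (by simpa using hx)
    obtain ⟨j, hj⟩ := exists_nat_gt (infDist x Ωᶜ)⁻¹
    refine Set.mem_iUnion.2 ⟨j, ?_⟩
    simp only [hU, Set.mem_setOf_eq]
    have h1 : (infDist x Ωᶜ)⁻¹ * infDist x Ωᶜ = 1 := inv_mul_cancel₀ hd.ne'
    nlinarith
  set ζ : ℕ → EuclideanSpace ℝ (Fin n) → ℝ :=
    fun j x => min 1 (((j:ℝ)+1) * infDist x Ωᶜ) with hζ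
  have hζlip : ∀ j : ℕ, LipschitzWith ((j:ℝ≥0)+1) (ζ j) := by
    intro j
    have hbase : LipschitzWith ((j:ℝ≥0)+1) (fun x => ((j:ℝ)+1) * infDist x Ωᶜ) := by
      apply LipschitzWith.of_dist_le_mul
      intro a b
      have h := (lipschitz_infDist_pt Ωᶜ).dist_le_mul a b
      rw [NNReal.coe_one, one_mul] at h
      have h2 : |infDist a Ωᶜ - infDist b Ωᶜ| ≤ dist a b := by
        rw [← Real.dist_eq]; exact h
      have hc : (((j:ℝ≥0)+1 : ℝ≥0) : ℝ) = (j:ℝ)+1 := by push_cast; ring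
      have hjnn : (0:ℝ) ≤ (j:ℝ)+1 := by positivity
      calc dist (((j:ℝ)+1) * infDist a Ωᶜ) (((j:ℝ)+1) * infDist b Ωᶜ)
          = |((j:ℝ)+1) * infDist a Ωᶜ - ((j:ℝ)+1) * infDist b Ωᶜ| := Real.dist_eq _ _
        _ = ((j:ℝ)+1) * |infDist a Ωᶜ - infDist b Ωᶜ| := by
            rw [← mul_sub, abs_mul, abs_of_nonneg hjnn]
        _ ≤ ((j:ℝ)+1) * dist a b := by
            exact mul_le_mul_of_nonneg_left h2 hjnn
        _ = (((j:ℝ≥0)+1 : ℝ≥0) : ℝ) * dist a b := by rw [hc]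
    exact hbase.const_min 1
  have hζ0 : ∀ j x, 0 ≤ ζ j x := by
    intro j x
    exact le_min zero_le_one (mul_nonneg (by positivity) infDist_nonneg)
  have hζ1 : ∀ j x, ζ j x ≤ 1 := fun j x => min_le_left _ _
  have hζout : ∀ j x, x ∉ Ω → ζ j x = 0 := by
    intro j x hx
    simp [hζ, infDist_zero_of_mem (Set.mem_compl hx)]
  have hζmem : ∀ j x, ζ j x ≠ 0 → x ∈ Ω := by
    intro j x h
    by_contra hx
    exact h (hζout j x hx)
  have hζU : ∀ j, ∀ x ∈ U j, ζ j x = 1 := by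
    intro j x hx
    simp only [hU, Set.mem_setOf_eq] at hx
    exact min_eq_left hx.le
  set v' : ℕ → ℝ := fun j => (volume (Ω \ U j)).toReal with hv'
  have hDmeas : ∀ j, MeasurableSet (Ω \ U j) := fun j => hΩo.measurableSet.diff (hUmeas j)
  have hDfin : ∀ j, volume (Ω \ U j) < ⊤ :=
    fun j => lt_of_le_of_lt (measure_mono Set.diff_subset) hVfin
  -- the matrices grad (u k) x always lie in S
  have hmemS2 : ∀ k x, grad (u k) x ∈ S := by
    intro k x i j
    have h := grad_entry_abs_le (hLip k) x i j
    have hK : (K:ℝ) ≤ C₀ := by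
      rw [hC₀]
      have := Lma.coe_nonneg
      linarith
    rw [Set.mem_Icc]
    rw [abs_le] at h
    constructor <;> nlinarith
  have hgradumeas : ∀ k, Measurable fun x => f (grad (u k) x) :=
    fun k => measurable_f_comp f hfc _ (fun i j => grad_entry_measurable (u k) i j)
  have hInt2 : ∀ k, IntegrableOn (fun x => f (grad (u k) x)) Ω volume := by
    intro k
    refine Integrable.mono' (g := fun _ => M0)
      (integrableOn_const (C := M0) hVfin.ne) ((hgradumeas k).aestronglyMeasurable) ?_
    filter_upwards with x
    rw [Real.norm_eq_abs]
    exact hMS _ (hmemS2 k x)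
  -- the sequence of integrals is bounded above
  have hbdd : ∀ k, (∫ x in Ω, f (grad (u k) x)) ≤ M0 * V := by
    intro k
    have := norm_setIntegral_le_of_norm_le_const (μ := volume) (s := Ω)
      (f := fun x => f (grad (u k) x)) hVfin
      (fun x _ => by rw [Real.norm_eq_abs]; exact hMS _ (hmemS2 k x))
    rw [Real.norm_eq_abs, abs_le] at this
    exact this.2
  -- key estimate
  have key : ∀ j : ℕ, ∀ᶠ k in atTop,
      f A * V - 2*M0*(v' j) ≤ ∫ x in Ω, f (grad (u k) x) := by
    intro j
    set εN : ℝ≥0 := ((j:ℝ≥0)+1)⁻¹ with hεN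
    have hεpos : (0:ℝ) < εN := by
      rw [hεN]; push_cast; positivity
    have hev := Metric.tendstoUniformlyOn_iff.1 hconv' (εN:ℝ) hεpos
    filter_upwards [hev] with k hk
    set g : EuclideanSpace ℝ (Fin n) → EuclideanSpace ℝ (Fin m) :=
      fun y => u k y - matCLM A y with hg
    set φ : EuclideanSpace ℝ (Fin n) → EuclideanSpace ℝ (Fin m) :=
      fun x => ζ j x • g x with hφ
    have hglip : LipschitzWith (K + Lma) g := (hLip k).sub (matCLM A).lipschitz
    have hgbound : ∀ x, ζ j x ≠ 0 → ‖g x‖ ≤ (εN:ℝ) := by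
      intro x hx
      have hxΩ := hζmem j x hx
      have := hk x hxΩ
      rw [dist_comm, dist_eq_norm] at this
      exact this.le
    have hφlip' : LipschitzWith ((K + Lma) + ((j:ℝ≥0)+1) * εN) φ :=
      lipschitz_smul_of_bound (hζlip j) hglip (hζ0 j) (hζ1 j) hgbound
    have hcancel : ((j:ℝ≥0)+1) * εN = 1 := by
      rw [hεN]
      exact mul_inv_cancel₀ (by positivity)
    rw [hcancel] at hφlip'
    have hφout : ∀ x ∉ Ω, φ x = 0 := by
      intro x hx
      simp [hφ, hζout j x hx]
    have hquas := hfq Ω hΩo hΩb A φ ⟨_, hφlip'⟩ hφout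
    -- entry bounds for A + grad φ
    have hmemS1 : ∀ x, (A + grad φ x) ∈ S := by
      intro x i j'
      have h1 := grad_entry_abs_le hφlip' x i j'
      have h2 := hAabs i j'
      have hcoe : ((K + Lma + 1 : ℝ≥0) : ℝ) = (K:ℝ) + (Lma:ℝ) + 1 := by push_cast; ring
      rw [hcoe] at h1
      have h3 : (A + grad φ x) i j' = A i j' + grad φ x i j' := rfl
      rw [Set.mem_Icc, h3]
      rw [abs_le] at h1 h2
      constructor <;> (rw [hC₀]; linarith [h1.1, h1.2, h2.1, h2.2])
    have hmeas1 : Measurable fun x => f (A + grad φ x) := by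
      apply measurable_f_comp f hfc
      intro i j'
      have : (fun x => (A + grad φ x) i j') = fun x => A i j' + grad φ x i j' := rfl
      rw [this]
      exact (grad_entry_measurable φ i j').const_add (A i j')
    have hInt1 : IntegrableOn (fun x => f (A + grad φ x)) Ω volume := by
      refine Integrable.mono' (g := fun _ => M0)
        (integrableOn_const (C := M0) hVfin.ne) hmeas1.aestronglyMeasurable ?_
      filter_upwards with x
      rw [Real.norm_eq_abs]
      exact hMS _ (hmemS1 x)
    -- a.e. equality on U j
    have hae : ∀ᵐ x ∂volume, x ∈ U j → f (A + grad φ x) = f (grad (u k) x) := by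
      filter_upwards [(hLip k).ae_differentiableAt (μ := volume)] with x hdiff hxU
      have heq : φ =ᶠ[nhds x] g := by
        filter_upwards [(hUopen j).mem_nhds hxU] with y hy
        simp [hφ, hζU j y hy]
      exact congrArg f (grad_local_eq A hdiff heq)
    have hIntEq : ∫ x in U j, f (A + grad φ x) = ∫ x in U j, f (grad (u k) x) :=
      setIntegral_congr_ae (hUmeas j) hae
    have hsplit1 : ∫ x in Ω \ U j, f (A + grad φ x)
        = (∫ x in Ω, f (A + grad φ x)) - ∫ x in U j, f (A + grad φ x) :=
      integral_diff (hUmeas j) hInt1 (hUsub j)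
    have hsplit2 : ∫ x in Ω \ U j, f (grad (u k) x)
        = (∫ x in Ω, f (grad (u k) x)) - ∫ x in U j, f (grad (u k) x) :=
      integral_diff (hUmeas j) (hInt2 k) (hUsub j)
    have hb1 : |∫ x in Ω \ U j, f (A + grad φ x)| ≤ M0 * v' j := by
      have := norm_setIntegral_le_of_norm_le_const (μ := volume) (s := Ω \ U j)
        (f := fun x => f (A + grad φ x)) (hDfin j)
        (fun x _ => by rw [Real.norm_eq_abs]; exact hMS _ (hmemS1 x))
      rwa [Real.norm_eq_abs] at this
    have hb2 : |∫ x in Ω \ U j, f (grad (u k) x)| ≤ M0 * v' j := by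
      have := norm_setIntegral_le_of_norm_le_const (μ := volume) (s := Ω \ U j)
        (f := fun x => f (grad (u k) x)) (hDfin j)
        (fun x _ => by rw [Real.norm_eq_abs]; exact hMS _ (hmemS2 k x))
      rwa [Real.norm_eq_abs] at this
    rw [abs_le] at hb1 hb2
    have h10 := hb1.1; have h11 := hb1.2; have h20 := hb2.1; have h21 := hb2.2
    rw [hIntEq] at hsplit1
    linarith
  -- pass to the liminf
  have hcobdd : IsCoboundedUnder (· ≥ ·) atTop (fun k => ∫ x in Ω, f (grad (u k) x)) := by
    apply Filter.IsBoundedUnder.isCoboundedUnder_ge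
    exact ⟨M0 * V, Filter.eventually_map.2 (Filter.Eventually.of_forall hbdd)⟩
  have hliminf_j : ∀ j, f A * V - 2*M0*(v' j) ≤
      Filter.liminf (fun k => ∫ x in Ω, f (grad (u k) x)) Filter.atTop :=
    fun j => le_liminf_of_le hcobdd (key j)
  have hv'0 : Tendsto v' atTop (nhds 0) := by
    have h1 : Tendsto (fun j => volume (Ω \ U j)) atTop (nhds (volume (⋂ j, Ω \ U j))) :=
      tendsto_measure_iInter_atTop (fun j => (hDmeas j).nullMeasurableSet)
        (fun a b hab => Set.diff_subset_diff_right (hUmono hab))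
        ⟨0, (hDfin 0).ne⟩
    have h2 : (⋂ j, Ω \ U j) = Ω \ ⋃ j, U j := (Set.diff_iUnion Ω U).symm
    rw [h2, hUnion, Set.diff_self, measure_empty] at h1
    have h3 := (ENNReal.tendsto_toReal (a := 0) (by simp)).comp h1
    simpa [hv', Function.comp_def] using h3
  have hfinal : Tendsto (fun j => f A * V - 2*M0*(v' j)) atTop (nhds (f A * V)) := by
    have := tendsto_const_nhds (x := f A * V) (f := atTop (α := ℕ)) |>.sub
      ((hv'0.const_mul (2*M0)))
    simpa using this
  exact le_of_tendsto hfinal (Filter.Eventually.of_forall hliminf_j)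
end
end

section
/- Let 1 ≤ p < +∞ and let f : ℝ^{m×n} → ℝ be separately convex (i.e., convex in each of the mn matrix entries when the other entries are held fixed) and satisfy |f(A)| ≤ C(1 + |A|^p) for some C > 0 and all A ∈ ℝ^{m×n}. Then there exists a constant α ≥ 0 such that for all A, B ∈ ℝ^{m×n}: |f(A) − f(B)| ≤ α (1 + |A|^{p−1} + |B|^{p−1}) |A − B|. In particular, every such f is locally Lipschitz. -/
open MeasureTheory Filter Topology Metric Bornology
open scoped ENNReal NNReal

noncomputable section

attribute [local instance] Matrix.normedAddCommGroup

private lemma oneD_lip {g : ℝ → ℝ} (hg : ConvexOn ℝ Set.univ g)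
    {R h K : ℝ} (hR : 0 ≤ R) (hh : 0 < h)
    (hb : ∀ t : ℝ, |t| ≤ R + h → |g t| ≤ K)
    {s t : ℝ} (hs : |s| ≤ R) (ht : |t| ≤ R) :
    |g s - g t| ≤ (2 * K / h) * |s - t| := by
  have hK : 0 ≤ K := le_trans (abs_nonneg _) (hb 0 (by rw [abs_zero]; linarith))
  have key : ∀ u v : ℝ, |u| ≤ R → |v| ≤ R → u < v →
      |g u - g v| ≤ (2 * K / h) * |u - v| := by
    intro u v hu hv huv
    rw [abs_le] at hu hv
    have hvRh : v < R + h := by linarith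
    have huRh : -(R + h) < u := by linarith
    have hgb1 : |g (R + h)| ≤ K := hb _ (by rw [abs_of_nonneg (by linarith)])
    have hgb2 : |g (-(R + h))| ≤ K := hb _ (by rw [abs_neg, abs_of_nonneg (by linarith)])
    have hgu : |g u| ≤ K := hb _ (by rw [abs_le]; constructor <;> linarith)
    have hgv : |g v| ≤ K := hb _ (by rw [abs_le]; constructor <;> linarith)
    rw [abs_le] at hgb1 hgb2 hgu hgv
    have hup : (g v - g u) / (v - u) ≤ (g (R + h) - g v) / (R + h - v) :=
      hg.slope_mono_adjacent (Set.mem_univ u) (Set.mem_univ (R + h)) huv hvRh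
    have hlo : (g u - g (-(R + h))) / (u - -(R + h)) ≤ (g v - g u) / (v - u) :=
      hg.slope_mono_adjacent (Set.mem_univ (-(R + h))) (Set.mem_univ v) huRh huv
    have h1 : (g (R + h) - g v) / (R + h - v) ≤ 2 * K / h :=
      div_le_div₀ (by linarith) (by linarith) hh (by linarith)
    have h2' : (g (-(R + h)) - g u) / (u - -(R + h)) ≤ 2 * K / h :=
      div_le_div₀ (by linarith) (by linarith) hh (by linarith)
    have h2 : -(2 * K / h) ≤ (g u - g (-(R + h))) / (u - -(R + h)) := by
      rw [neg_le, ← neg_div, neg_sub]; exact h2'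
    have hd : 0 < v - u := sub_pos.mpr huv
    have e1 : g v - g u ≤ 2 * K / h * (v - u) := (div_le_iff₀ hd).mp (hup.trans h1)
    have e2 : -(2 * K / h) * (v - u) ≤ g v - g u := (le_div_iff₀ hd).mp (h2.trans hlo)
    have habs : |u - v| = v - u := by rw [abs_sub_comm, abs_of_pos hd]
    rw [habs, abs_sub_comm]
    exact abs_le.mpr ⟨by linarith, e1⟩
  rcases lt_trichotomy s t with hlt | heq | hgt
  · exact key s t hs ht hlt
  · subst heq; simp
  · rw [abs_sub_comm, abs_sub_comm s t]; exact key t s ht hs hgt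

private lemma pow_bound {p R : ℝ} (hp : 1 ≤ p) (hR : 0 ≤ R) :
    1 + (2 * R + 1) ^ p ≤ ((1 + 6 ^ p) * (1 + R ^ (p - 1))) * (R + 1) := by
  have hp1 : (0:ℝ) ≤ p - 1 := by linarith
  have hRp : (0:ℝ) ≤ R ^ (p - 1) := Real.rpow_nonneg hR _
  have h1 : (2 * R + 1) ^ p ≤ (3:ℝ) ^ p * (R + 1) ^ p :=
    calc (2 * R + 1) ^ p ≤ (3 * (R + 1)) ^ p :=
          Real.rpow_le_rpow (by linarith) (by linarith) (by linarith)
      _ = (3:ℝ) ^ p * (R + 1) ^ p := Real.mul_rpow (by norm_num) (by linarith)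
  have h2 : (R + 1) ^ p = (R + 1) ^ (p - 1) * (R + 1) := by
    rw [← Real.rpow_add_one (by positivity : (R + 1 : ℝ) ≠ 0) (p - 1), sub_add_cancel]
  have h3 : (R + 1) ^ (p - 1) ≤ 2 ^ (p - 1) * (1 + R ^ (p - 1)) := by
    have h2p : (0:ℝ) ≤ 2 ^ (p - 1) := Real.rpow_nonneg (by norm_num) _
    rcases le_total R 1 with h | h
    · calc (R + 1) ^ (p - 1) ≤ (2:ℝ) ^ (p - 1) :=
            Real.rpow_le_rpow (by linarith) (by linarith) hp1
        _ ≤ 2 ^ (p - 1) * (1 + R ^ (p - 1)) := by nlinarith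
    · calc (R + 1) ^ (p - 1) ≤ (2 * R) ^ (p - 1) :=
            Real.rpow_le_rpow (by linarith) (by linarith) hp1
        _ = 2 ^ (p - 1) * R ^ (p - 1) := Real.mul_rpow (by norm_num) hR
        _ ≤ 2 ^ (p - 1) * (1 + R ^ (p - 1)) := by nlinarith
  have h4 : (3:ℝ) ^ p * 2 ^ (p - 1) ≤ 6 ^ p := by
    have : (2:ℝ) ^ (p - 1) ≤ 2 ^ p :=
      Real.rpow_le_rpow_of_exponent_le (by norm_num) (by linarith)
    have h6 : (6:ℝ) ^ p = 3 ^ p * 2 ^ p := by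
      rw [← Real.mul_rpow (by norm_num) (by norm_num)]; norm_num
    have h3p : (0:ℝ) ≤ 3 ^ p := Real.rpow_nonneg (by norm_num) _
    nlinarith
  have h6p : (0:ℝ) ≤ 6 ^ p := Real.rpow_nonneg (by norm_num) _
  have h2p : (0:ℝ) ≤ 2 ^ (p - 1) := Real.rpow_nonneg (by norm_num) _
  have h3p : (0:ℝ) ≤ 3 ^ p := Real.rpow_nonneg (by norm_num) _
  have hR1p : (0:ℝ) ≤ (R + 1) ^ (p - 1) := Real.rpow_nonneg (by linarith) _
  nlinarith [mul_le_mul_of_nonneg_left h3 h3p,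
    mul_le_mul_of_nonneg_right h4 (mul_nonneg (by linarith) (by linarith) : (0:ℝ) ≤ (1 + R ^ (p-1)) * (R + 1))]

private lemma step_lip {m n : ℕ} {p : ℝ} (hp : 1 ≤ p)
    {f : Matrix (Fin m) (Fin n) ℝ → ℝ}
    (hsep : ∀ (A : Matrix (Fin m) (Fin n) ℝ) (i : Fin m) (j : Fin n),
      ConvexOn ℝ Set.univ (fun t : ℝ => f (A + t • Matrix.single i j (1:ℝ))))
    {C : ℝ} (hC : 0 < C)
    (hgrowth : ∀ A, |f A| ≤ C * (1 + ‖A‖ ^ p))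
    {R : ℝ} (hR : 0 ≤ R)
    (N : Matrix (Fin m) (Fin n) ℝ) (i : Fin m) (j : Fin n)
    (hN0 : N i j = 0) (hN : ∀ i' j', |N i' j'| ≤ R)
    {a b : ℝ} (ha : |a| ≤ R) (hb : |b| ≤ R) :
    |f (N + a • Matrix.single i j (1:ℝ)) - f (N + b • Matrix.single i j (1:ℝ))|
      ≤ (2 * (C * (1 + (2 * R + 1) ^ p)) / (R + 1)) * |a - b| := by
  have hbound : ∀ t : ℝ, |t| ≤ R + (R + 1) →
      |f (N + t • Matrix.single i j (1:ℝ))| ≤ C * (1 + (2 * R + 1) ^ p) := by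
    intro t ht
    have hnorm : ‖N + t • Matrix.single i j (1:ℝ)‖ ≤ 2 * R + 1 := by
      rw [Matrix.norm_le_iff (by linarith)]
      intro i' j'
      by_cases h : i = i' ∧ j = j'
      · obtain ⟨rfl, rfl⟩ := h
        simp only [Matrix.add_apply, Matrix.smul_apply, Matrix.single_apply_same,
          smul_eq_mul, mul_one, hN0, zero_add, Real.norm_eq_abs]
        linarith
      · simp only [Matrix.add_apply, Matrix.smul_apply,
          Matrix.single_apply_of_ne (h := h), smul_eq_mul, mul_zero, add_zero,
          Real.norm_eq_abs]
        have := hN i' j'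
        linarith
    refine (hgrowth _).trans ?_
    have : ‖N + t • Matrix.single i j (1:ℝ)‖ ^ p ≤ (2 * R + 1) ^ p :=
      Real.rpow_le_rpow (norm_nonneg _) hnorm (by linarith)
    nlinarith
  exact oneD_lip (hsep N i j) hR (by linarith : (0:ℝ) < R + 1) hbound ha hb

private lemma chain_lip {m n : ℕ} {p : ℝ} (hp : 1 ≤ p)
    {f : Matrix (Fin m) (Fin n) ℝ → ℝ}
    (hsep : ∀ (A : Matrix (Fin m) (Fin n) ℝ) (i : Fin m) (j : Fin n),
      ConvexOn ℝ Set.univ (fun t : ℝ => f (A + t • Matrix.single i j (1:ℝ))))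
    {C : ℝ} (hC : 0 < C)
    (hgrowth : ∀ A, |f A| ≤ C * (1 + ‖A‖ ^ p))
    (A B : Matrix (Fin m) (Fin n) ℝ) :
    |f B - f A| ≤ (m * n : ℝ) *
      (2 * (C * (1 + (2 * max ‖A‖ ‖B‖ + 1) ^ p)) / (max ‖A‖ ‖B‖ + 1)) * ‖A - B‖ := by
  set R : ℝ := max ‖A‖ ‖B‖ with hRdef
  have hR : 0 ≤ R := le_trans (norm_nonneg A) (le_max_left _ _)
  set L : ℝ := 2 * (C * (1 + (2 * R + 1) ^ p)) / (R + 1) with hLdef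
  have hL : 0 ≤ L := by
    apply div_nonneg _ (by linarith)
    have := Real.rpow_nonneg (by linarith : (0:ℝ) ≤ 2 * R + 1) p
    nlinarith
  set Msel : Finset (Fin m × Fin n) → Matrix (Fin m) (Fin n) ℝ :=
    fun s => Matrix.of fun i j => if (i, j) ∈ s then B i j else A i j with hMdef
  have claim : ∀ s : Finset (Fin m × Fin n),
      |f (Msel s) - f A| ≤ (s.card : ℝ) * L * ‖A - B‖ := by
    intro s
    induction s using Finset.induction_on with
    | empty =>
      have : Msel ∅ = A := by ext i j; simp [hMdef]
      simp [this]
    | @insert q s hq ih =>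
      obtain ⟨i, j⟩ := q
      set N : Matrix (Fin m) (Fin n) ℝ :=
        Matrix.of fun i' j' => if (i', j') = (i, j) then 0 else Msel s i' j' with hNdef
      have hNij : N i j = 0 := by simp [hNdef]
      have hNb : ∀ i' j', |N i' j'| ≤ R := by
        intro i' j'
        by_cases h : (i', j') = (i, j)
        · injection h with h1 h2; subst h1; subst h2; simp [hNdef, hR]
        · simp only [hNdef, Matrix.of_apply, h, if_false, hMdef]
          by_cases h2 : (i', j') ∈ s
          · simp only [h2, if_true]
            exact le_trans (Matrix.norm_entry_le_entrywise_sup_norm B) (le_max_right _ _)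
          · simp only [h2, if_false]
            exact le_trans (Matrix.norm_entry_le_entrywise_sup_norm A) (le_max_left _ _)
      have e1 : Msel s = N + (A i j) • Matrix.single i j (1:ℝ) := by
        ext i' j'
        simp only [Matrix.add_apply, Matrix.smul_apply, smul_eq_mul, Matrix.of_apply,
          hNdef, hMdef]
        by_cases h : i = i' ∧ j = j'
        · obtain ⟨rfl, rfl⟩ := h
          rw [Matrix.single_apply_same]
          simp [hq]
        · rw [Matrix.single_apply_of_ne (h := h)]
          have h' : ¬ ((i', j') = (i, j)) := by
            simp only [Prod.mk.injEq]; tauto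
          simp [h']
      have e2 : Msel (insert (i, j) s) = N + (B i j) • Matrix.single i j (1:ℝ) := by
        ext i' j'
        simp only [Matrix.add_apply, Matrix.smul_apply, smul_eq_mul, Matrix.of_apply,
          hNdef, hMdef]
        by_cases h : i = i' ∧ j = j'
        · obtain ⟨rfl, rfl⟩ := h
          rw [Matrix.single_apply_same]
          simp
        · rw [Matrix.single_apply_of_ne (h := h)]
          have h' : ¬ ((i', j') = (i, j)) := by
            simp only [Prod.mk.injEq]; tauto
          simp only [Finset.mem_insert, h', if_false, mul_zero, add_zero, false_or]
      have hAij : |A i j| ≤ R :=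
        le_trans (Matrix.norm_entry_le_entrywise_sup_norm A) (le_max_left _ _)
      have hBij : |B i j| ≤ R :=
        le_trans (Matrix.norm_entry_le_entrywise_sup_norm B) (le_max_right _ _)
      have hstep := step_lip hp hsep hC hgrowth hR N i j hNij hNb hBij hAij
      rw [← e1, ← e2, ← hLdef] at hstep
      have hentry : |B i j - A i j| ≤ ‖A - B‖ := by
        rw [abs_sub_comm]
        exact Matrix.norm_entry_le_entrywise_sup_norm (A - B)
      have h2 : |f (Msel (insert (i, j) s)) - f (Msel s)| ≤ L * ‖A - B‖ :=
        hstep.trans (mul_le_mul_of_nonneg_left hentry hL)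
      have h3 := abs_sub_le (f (Msel (insert (i, j) s))) (f (Msel s)) (f A)
      rw [Finset.card_insert_of_notMem hq]
      push_cast
      nlinarith [norm_nonneg (A - B)]
  have huniv : Msel Finset.univ = B := by ext i j; simp [hMdef]
  have := claim Finset.univ
  rw [huniv] at this
  simpa [Finset.card_univ] using this

/-- p-Lipschitz continuity of separately convex functions with p-growth: if
`f : ℝ^{m×n} → ℝ` is convex in each matrix entry separately and `|f(A)| ≤ C(1 + |A|^p)`,
then there is `α ≥ 0` with `|f(A) − f(B)| ≤ α(1 + |A|^{p−1} + |B|^{p−1})|A − B|`;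
in particular `f` is locally Lipschitz. -/
theorem stmt4 {m n : ℕ} (p : ℝ) (hp : 1 ≤ p)
    (f : Matrix (Fin m) (Fin n) ℝ → ℝ)
    (hsep : ∀ (A : Matrix (Fin m) (Fin n) ℝ) (i : Fin m) (j : Fin n),
      ConvexOn ℝ Set.univ (fun t : ℝ => f (A + t • Matrix.single i j (1:ℝ))))
    (C : ℝ) (hC : 0 < C)
    (hgrowth : ∀ A, |f A| ≤ C * (1 + ‖A‖ ^ p)) :
    (∃ α : ℝ, 0 ≤ α ∧ ∀ A B : Matrix (Fin m) (Fin n) ℝ,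
        |f A - f B| ≤ α * (1 + ‖A‖ ^ (p - 1) + ‖B‖ ^ (p - 1)) * ‖A - B‖) ∧
      LocallyLipschitz f := by
  set α : ℝ := (m * n : ℝ) * (2 * C * (1 + 6 ^ p)) with hαdef
  have h6p : (0:ℝ) ≤ 6 ^ p := Real.rpow_nonneg (by norm_num) _
  have hα : 0 ≤ α := by positivity
  have key : ∀ A B : Matrix (Fin m) (Fin n) ℝ,
      |f A - f B| ≤ α * (1 + ‖A‖ ^ (p - 1) + ‖B‖ ^ (p - 1)) * ‖A - B‖ := by
    intro A B
    set R : ℝ := max ‖A‖ ‖B‖ with hRdef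
    have hR : 0 ≤ R := le_trans (norm_nonneg A) (le_max_left _ _)
    have hApow : (0:ℝ) ≤ ‖A‖ ^ (p - 1) := Real.rpow_nonneg (norm_nonneg _) _
    have hBpow : (0:ℝ) ≤ ‖B‖ ^ (p - 1) := Real.rpow_nonneg (norm_nonneg _) _
    have hRsum : R ^ (p - 1) ≤ ‖A‖ ^ (p - 1) + ‖B‖ ^ (p - 1) := by
      rcases max_choice ‖A‖ ‖B‖ with h | h <;> rw [← hRdef] at h <;> rw [h] <;> linarith
    have hL2 : 2 * (C * (1 + (2 * R + 1) ^ p)) / (R + 1)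
        ≤ 2 * C * (1 + 6 ^ p) * (1 + ‖A‖ ^ (p - 1) + ‖B‖ ^ (p - 1)) := by
      rw [div_le_iff₀ (by linarith : (0:ℝ) < R + 1)]
      have hpb := pow_bound hp hR
      have hRp : (0:ℝ) ≤ R ^ (p - 1) := Real.rpow_nonneg hR _
      nlinarith [hC.le, mul_le_mul_of_nonneg_left hpb (by positivity : (0:ℝ) ≤ 2 * C),
        mul_le_mul_of_nonneg_left hRsum
          (mul_nonneg (by positivity : (0:ℝ) ≤ 2 * C * (1 + 6 ^ p)) (by linarith : (0:ℝ) ≤ R + 1))]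
    calc |f A - f B| = |f B - f A| := abs_sub_comm _ _
      _ ≤ (m * n : ℝ) * (2 * (C * (1 + (2 * R + 1) ^ p)) / (R + 1)) * ‖A - B‖ :=
          chain_lip hp hsep hC hgrowth A B
      _ ≤ (m * n : ℝ) * (2 * C * (1 + 6 ^ p) * (1 + ‖A‖ ^ (p - 1) + ‖B‖ ^ (p - 1))) * ‖A - B‖ := by
          have hmn : (0:ℝ) ≤ (m * n : ℝ) := by positivity
          have := mul_le_mul_of_nonneg_left hL2 hmn
          exact mul_le_mul_of_nonneg_right this (norm_nonneg _)
      _ = α * (1 + ‖A‖ ^ (p - 1) + ‖B‖ ^ (p - 1)) * ‖A - B‖ := by rw [hαdef]; ring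
  refine ⟨⟨α, hα, key⟩, ?_⟩
  intro x
  have hxpow : (0:ℝ) ≤ (‖x‖ + 1) ^ (p - 1) := Real.rpow_nonneg (by positivity) _
  have hKnn : (0:ℝ) ≤ α * (1 + 2 * (‖x‖ + 1) ^ (p - 1)) := by positivity
  refine ⟨(α * (1 + 2 * (‖x‖ + 1) ^ (p - 1))).toNNReal, closedBall x 1,
    closedBall_mem_nhds x one_pos, LipschitzOnWith.of_dist_le_mul ?_⟩
  intro A hA B hB
  rw [Real.dist_eq, dist_eq_norm, Real.coe_toNNReal _ hKnn]
  have hAx : ‖A‖ ≤ ‖x‖ + 1 := by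
    have h1 : dist A x ≤ 1 := mem_closedBall.mp hA
    have h2 := norm_sub_norm_le A x
    rw [← dist_eq_norm] at h2
    linarith
  have hBx : ‖B‖ ≤ ‖x‖ + 1 := by
    have h1 : dist B x ≤ 1 := mem_closedBall.mp hB
    have h2 := norm_sub_norm_le B x
    rw [← dist_eq_norm] at h2
    linarith
  have hA2 : ‖A‖ ^ (p - 1) ≤ (‖x‖ + 1) ^ (p - 1) :=
    Real.rpow_le_rpow (norm_nonneg _) hAx (by linarith)
  have hB2 : ‖B‖ ^ (p - 1) ≤ (‖x‖ + 1) ^ (p - 1) :=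
    Real.rpow_le_rpow (norm_nonneg _) hBx (by linarith)
  calc |f A - f B| ≤ α * (1 + ‖A‖ ^ (p - 1) + ‖B‖ ^ (p - 1)) * ‖A - B‖ := key A B
    _ ≤ α * (1 + 2 * (‖x‖ + 1) ^ (p - 1)) * ‖A - B‖ := by
        apply mul_le_mul_of_nonneg_right _ (norm_nonneg _)
        apply mul_le_mul_of_nonneg_left _ hα
        linarith
end
end

section
/- (Biting lemma of Chacon) Let Ω ⊂ ℝⁿ be a bounded Lebesgue-measurable set and let {z_k} ⊂ L¹(Ω;ℝ^m) be a bounded sequence. Then there exist a subsequence {z_{k_i}}, a function z ∈ L¹(Ω;ℝ^m), and a nested sequence of measurable sets Ω_{j+1} ⊆ Ω_j ⊆ Ω with Lebesgue measure |Ω_j| → 0 as j → ∞, such that for every j ∈ ℕ, z_{k_i} converges to z weakly in L¹(Ω∖Ω_j;ℝ^m) as i → ∞; that is, for every g ∈ L^∞(Ω;ℝ^m) and every j: ∫_{Ω∖Ω_j} ⟨g(x), z_{k_i}(x)⟩ dx → ∫_{Ω∖Ω_j} ⟨g(x), z(x)⟩ dx. -/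
set_option maxHeartbeats 2000000
set_option synthInstance.maxHeartbeats 1000000

open MeasureTheory Filter Topology Metric Bornology
open scoped ENNReal NNReal RealInnerProductSpace

noncomputable section

/-- Diagonal Bolzano–Weierstrass over a countable family of bounded real sequences. -/
lemma bw_diag {ι : Type*} [Countable ι] (b : ι → ℕ → ℝ)
    (hb : ∀ q, ∃ M, ∀ i, |b q i| ≤ M) :
    ∃ φ : ℕ → ℕ, StrictMono φ ∧ ∃ L : ι → ℝ,
      ∀ q, Tendsto (fun i => b q (φ i)) atTop (𝓝 (L q)) := by
  choose M hM using hb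
  set s : Set (ι → ℝ) := Set.univ.pi (fun q => Set.Icc (-(M q)) (M q)) with hs
  have hsc : IsCompact s := isCompact_univ_pi (fun q => isCompact_Icc)
  have hmem : ∀ i, (fun q => b q i) ∈ s := by
    intro i q _
    exact abs_le.mp (hM q i)
  obtain ⟨a, -, φ, hφ, hconv⟩ := hsc.tendsto_subseq hmem
  refine ⟨φ, hφ, a, fun q => ?_⟩
  exact (tendsto_pi_nhds.mp hconv) q

lemma hilbert_weak {H : Type*} [NormedAddCommGroup H] [InnerProductSpace ℝ H]
    [CompleteSpace H] (w : ℕ → H) (B : ℝ) (hB : ∀ i, ‖w i‖ ≤ B)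
    (d : ℕ → H) (hd : DenseRange d)
    (hc : ∀ q, ∃ l, Tendsto (fun i => ⟪w i, d q⟫) atTop (𝓝 l)) :
    ∃ v : H, ∀ g : H, Tendsto (fun i => ⟪w i, g⟫) atTop (𝓝 ⟪v, g⟫) := by
  have hB0 : 0 ≤ B := le_trans (norm_nonneg _) (hB 0)
  -- every inner sequence is Cauchy
  have hcauchy : ∀ g : H, CauchySeq (fun i => ⟪w i, g⟫) := by
    intro g
    rw [Metric.cauchySeq_iff']
    intro ε hε
    obtain ⟨q, hq⟩ := Metric.denseRange_iff.mp hd g (ε / (4 * (B + 1)))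
      (by positivity)
    obtain ⟨l, hl⟩ := hc q
    have hlc : CauchySeq (fun i => ⟪w i, d q⟫) := hl.cauchySeq
    rw [Metric.cauchySeq_iff'] at hlc
    obtain ⟨N, hN⟩ := hlc (ε / 2) (by positivity)
    refine ⟨N, fun i hi => ?_⟩
    have key : ∀ k, |⟪w k, g⟫ - ⟪w k, d q⟫| ≤ B * (ε / (4 * (B + 1))) := by
      intro k
      rw [← inner_sub_right]
      calc |⟪w k, g - d q⟫| ≤ ‖w k‖ * ‖g - d q‖ := abs_real_inner_le_norm _ _
        _ ≤ B * (ε / (4 * (B + 1))) := by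
            apply mul_le_mul (hB k) ?_ (norm_nonneg _) hB0
            rw [← dist_eq_norm]
            exact le_of_lt hq
    have hBe : B * (ε / (4 * (B + 1))) < ε / 4 := by
      rw [mul_div_assoc']
      rw [div_lt_div_iff₀ (by positivity) (by norm_num)]
      nlinarith
    have h1 := key i
    have h2 := key N
    have h3 := hN i hi
    rw [Real.dist_eq] at h3 ⊢
    have : ⟪w i, g⟫ - ⟪w N, g⟫ =
        (⟪w i, g⟫ - ⟪w i, d q⟫) + (⟪w i, d q⟫ - ⟪w N, d q⟫) - (⟪w N, g⟫ - ⟪w N, d q⟫) := by ring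
    rw [this]
    calc |_ + _ - _| ≤ |⟪w i, g⟫ - ⟪w i, d q⟫| + |⟪w i, d q⟫ - ⟪w N, d q⟫|
          + |⟪w N, g⟫ - ⟪w N, d q⟫| := by
          exact (abs_sub _ _).trans (by gcongr; exact abs_add_le _ _)
      _ < ε := by linarith
  have hlim : ∀ g : H, ∃ l, Tendsto (fun i => ⟪w i, g⟫) atTop (𝓝 l) :=
    fun g => cauchySeq_tendsto_of_complete (hcauchy g)
  choose f hf using hlim
  -- f is linear and bounded
  have hadd : ∀ g₁ g₂, f (g₁ + g₂) = f g₁ + f g₂ := by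
    intro g₁ g₂
    refine tendsto_nhds_unique (hf (g₁ + g₂)) ?_
    have := (hf g₁).add (hf g₂)
    simpa [inner_add_right] using this
  have hsmul : ∀ (c : ℝ) g, f (c • g) = c * f g := by
    intro c g
    refine tendsto_nhds_unique (hf (c • g)) ?_
    have := (hf g).const_mul c
    simpa [inner_smul_right] using this
  have hbound : ∀ g, |f g| ≤ B * ‖g‖ := by
    intro g
    have : Tendsto (fun i => |⟪w i, g⟫|) atTop (𝓝 |f g|) := (hf g).abs
    refine le_of_tendsto this (Eventually.of_forall fun i => ?_)
    exact (abs_real_inner_le_norm _ _).trans (by gcongr; exact hB i)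
  let Flin : H →ₗ[ℝ] ℝ :=
    { toFun := f, map_add' := hadd, map_smul' := hsmul }
  let F : H →L[ℝ] ℝ := LinearMap.mkContinuous Flin B (fun g => by
    rw [Real.norm_eq_abs]; exact hbound g)
  refine ⟨(InnerProductSpace.toDual ℝ H).symm F, fun g => ?_⟩
  have : ⟪(InnerProductSpace.toDual ℝ H).symm F, g⟫ = F g :=
    InnerProductSpace.toDual_symm_apply
  rw [this]
  exact hf g

section trunc
variable {F : Type*} [NormedAddCommGroup F] [NormedSpace ℝ F]

/-- Truncation of a vector to norm at most `r`. -/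
noncomputable def trunc (r : ℝ) (v : F) : F := (min 1 (r / ‖v‖)) • v

lemma min_one_div_mul {a x : ℝ} (ha : 0 < a) (hx : 0 ≤ x) :
    min 1 (x / a) * a = min a x := by
  rcases le_total a x with h | h
  · rw [min_eq_left ((one_le_div ha).mpr h), one_mul, min_eq_left h]
  · rw [min_eq_right ((div_le_one ha).mpr h), div_mul_cancel₀ _ ha.ne', min_eq_right h]

lemma sub_min_eq (a r : ℝ) : a - min a r = max (a - r) 0 := by
  rcases le_total a r with h | h
  · rw [min_eq_left h, max_eq_right (sub_nonpos.mpr h)]; ring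
  · rw [min_eq_right h, max_eq_left (sub_nonneg.mpr h)]

lemma norm_trunc {r : ℝ} (hr : 0 ≤ r) (v : F) : ‖trunc r v‖ = min ‖v‖ r := by
  by_cases hv : v = 0
  · simp [trunc, hv, min_eq_left hr]
  have ha : 0 < ‖v‖ := norm_pos_iff.mpr hv
  have hnn : 0 ≤ min 1 (r / ‖v‖) := le_min zero_le_one (by positivity)
  rw [trunc, norm_smul, Real.norm_eq_abs, abs_of_nonneg hnn, min_one_div_mul ha hr]

lemma norm_trunc_le {r : ℝ} (hr : 0 ≤ r) (v : F) : ‖trunc r v‖ ≤ r := by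
  rw [norm_trunc hr]; exact min_le_right _ _

lemma norm_trunc_sub_trunc {r s : ℝ} (hr : 0 ≤ r) (hrs : r ≤ s) (v : F) :
    ‖trunc s v - trunc r v‖ = max (‖v‖ - r) 0 - max (‖v‖ - s) 0 := by
  have key : max (‖v‖ - r) 0 - max (‖v‖ - s) 0 = min ‖v‖ s - min ‖v‖ r := by
    rw [← sub_min_eq, ← sub_min_eq]; ring
  rw [key]
  by_cases hv : v = 0
  · simp [trunc, hv, min_eq_left (hr.trans hrs), min_eq_left hr]
  have ha : 0 < ‖v‖ := norm_pos_iff.mpr hv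
  have hmono : min 1 (r / ‖v‖) ≤ min 1 (s / ‖v‖) := by gcongr
  rw [trunc, trunc, ← sub_smul, norm_smul, Real.norm_eq_abs,
    abs_of_nonneg (sub_nonneg.mpr hmono), sub_mul,
    min_one_div_mul ha hr, min_one_div_mul ha (hr.trans hrs)]

lemma norm_sub_trunc {r : ℝ} (hr : 0 ≤ r) (v : F) :
    ‖v - trunc r v‖ = max (‖v‖ - r) 0 := by
  rw [← sub_min_eq]
  by_cases hv : v = 0
  · simp [trunc, hv, min_eq_left hr]
  have ha : 0 < ‖v‖ := norm_pos_iff.mpr hv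
  have hle : min 1 (r / ‖v‖) ≤ 1 := min_le_left _ _
  calc ‖v - trunc r v‖ = ‖(1 - min 1 (r / ‖v‖)) • v‖ := by
        rw [trunc, sub_smul, one_smul]
      _ = (1 - min 1 (r / ‖v‖)) * ‖v‖ := by
        rw [norm_smul, Real.norm_eq_abs, abs_of_nonneg (by linarith)]
      _ = ‖v‖ - min ‖v‖ r := by
        rw [sub_mul, one_mul, min_one_div_mul ha hr, min_comm]

lemma aestronglyMeasurable_trunc {α : Type*} [MeasurableSpace α] {μ : Measure α}
    [SecondCountableTopology F] {f : α → F} (hf : AEStronglyMeasurable f μ) (r : ℝ) :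
    AEStronglyMeasurable (fun x => trunc r (f x)) μ := by
  have h1 : AEMeasurable (fun x => min 1 (r / ‖f x‖)) μ :=
    aemeasurable_const.min (aemeasurable_const.div hf.norm.aemeasurable)
  exact h1.aestronglyMeasurable.smul hf

end trunc


/-- The Biting lemma of Chacon: every bounded sequence in `L¹(Ω;ℝᵐ)` (with `Ω ⊆ ℝⁿ` bounded
and measurable) has a subsequence `z_{k_i}`, a limit `z ∈ L¹(Ω;ℝᵐ)` and a nested sequence of
measurable sets `Ω_{j+1} ⊆ Ω_j ⊆ Ω` with `|Ω_j| → 0`, such that for every `j`,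
`z_{k_i} ⇀ z` weakly in `L¹(Ω ∖ Ω_j; ℝᵐ)`, i.e. the integrals against every essentially
bounded measurable test function converge. -/
theorem stmt10 {n m : ℕ} (Ω : Set (EuclideanSpace ℝ (Fin n)))
    (hΩm : MeasurableSet Ω) (hΩb : Bornology.IsBounded Ω)
    (z : ℕ → EuclideanSpace ℝ (Fin n) → EuclideanSpace ℝ (Fin m))
    (hint : ∀ k, IntegrableOn (z k) Ω)
    (hbdd : ∃ C : ℝ, ∀ k, (∫ x in Ω, ‖z k x‖) ≤ C) :
    ∃ φ : ℕ → ℕ, StrictMono φ ∧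
    ∃ zl : EuclideanSpace ℝ (Fin n) → EuclideanSpace ℝ (Fin m), IntegrableOn zl Ω ∧
    ∃ Ωs : ℕ → Set (EuclideanSpace ℝ (Fin n)),
      (∀ j, MeasurableSet (Ωs j) ∧ Ωs j ⊆ Ω) ∧
      (∀ j, Ωs (j + 1) ⊆ Ωs j) ∧
      Tendsto (fun j => volume (Ωs j)) atTop (nhds 0) ∧
      ∀ (j : ℕ) (g : EuclideanSpace ℝ (Fin n) → EuclideanSpace ℝ (Fin m)),
        AEStronglyMeasurable g (volume.restrict Ω) →
        (∃ C : ℝ, ∀ᵐ x ∂(volume.restrict Ω), ‖g x‖ ≤ C) →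
        Tendsto (fun i => ∫ x in Ω \ Ωs j, ⟪g x, z (φ i) x⟫) atTop
          (nhds (∫ x in Ω \ Ωs j, ⟪g x, zl x⟫)) := by
  obtain ⟨C, hC⟩ := hbdd
  set μ := volume.restrict Ω with hμ
  have hΩfin : volume Ω < ∞ := hΩb.measure_lt_top
  haveI : IsFiniteMeasure μ := ⟨by rwa [hμ, Measure.restrict_apply_univ]⟩
  have hC0 : 0 ≤ C := le_trans (integral_nonneg fun x => norm_nonneg _) (hC 0)
  have hsm : ∀ k, AEStronglyMeasurable (z k) μ := fun k => (hint k).aestronglyMeasurable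
  -- strongly measurable representatives
  set zsm : ℕ → _ := fun k => (hsm k).mk (z k) with hzsm_def
  have hzsm : ∀ k, StronglyMeasurable (zsm k) := fun k => (hsm k).stronglyMeasurable_mk
  have heq : ∀ k, z k =ᵐ[μ] zsm k := fun k => (hsm k).ae_eq_mk
  -- the tail-mass functionals
  set A : ℕ → ℕ → ℝ := fun r k => ∫ x, max (‖z k x‖ - (r : ℝ)) 0 ∂μ with hA_def
  have haint : ∀ (r : ℝ) (k), Integrable (fun x => max (‖z k x‖ - r) 0) μ :=
    fun r k => ((hint k).norm.sub (integrable_const r)).pos_part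
  have hA_nonneg : ∀ r k, 0 ≤ A r k :=
    fun r k => integral_nonneg fun x => le_max_right _ _
  have hA_le : ∀ r k, A r k ≤ C := by
    intro r k
    refine le_trans (integral_mono (haint _ _) (hint k).norm ?_) (hC k)
    intro x
    exact max_le (by simp [sub_le_self_iff]) (norm_nonneg _)
  have hA_anti : ∀ (r s : ℕ) (k), r ≤ s → A s k ≤ A r k := by
    intro r s k hrs
    refine integral_mono (haint _ _) (haint _ _) fun x => ?_
    have : (r:ℝ) ≤ (s:ℝ) := by exact_mod_cast hrs
    exact max_le_max (by linarith) le_rfl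
  -- the L² space
  set H := Lp (EuclideanSpace ℝ (Fin m)) 2 μ with hH_def
  haveI : Fact ((2 : ℝ≥0∞) ≠ ∞) := ⟨ENNReal.ofNat_ne_top⟩
  haveI hsep : MeasureTheory.IsSeparable μ := by infer_instance
  haveI : SecondCountableTopology H := MeasureTheory.Lp.SecondCountableTopology
  haveI : Nonempty H := ⟨0⟩
  -- dense sequence in H
  set d : ℕ → H := TopologicalSpace.denseSeq H with hd_def
  have hd : DenseRange d := TopologicalSpace.denseRange_denseSeq H
  -- truncated elements of H
  have hWmem : ∀ (r k : ℕ), MemLp (fun x => trunc (r : ℝ) (z k x)) 2 μ := fun r k =>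
    MemLp.of_bound (aestronglyMeasurable_trunc (hsm k) _) _
      (ae_of_all _ fun x => norm_trunc_le (Nat.cast_nonneg r) _)
  set W : ℕ → ℕ → H := fun r k => ((hWmem r k).toLp _) with hW_def
  set Breal : ℕ → ℝ := fun r =>
    ((μ Set.univ) ^ ((2 : ℝ≥0∞).toReal)⁻¹ * ENNReal.ofReal (r : ℝ)).toReal with hB_def
  have hWnorm : ∀ r k, ‖W r k‖ ≤ Breal r := by
    intro r k
    rw [hW_def, Lp.norm_toLp]
    refine ENNReal.toReal_mono ?_ (eLpNorm_le_of_ae_bound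
      (ae_of_all _ fun x => norm_trunc_le (Nat.cast_nonneg r) _))
    exact ENNReal.mul_ne_top
      (ENNReal.rpow_lt_top_of_nonneg (by positivity) (measure_ne_top μ _)).ne
      ENNReal.ofReal_ne_top
  have hBreal0 : ∀ r, 0 ≤ Breal r := fun r => ENNReal.toReal_nonneg
  -- the diagonal extraction
  set b : (ℕ ⊕ ℕ × ℕ) → ℕ → ℝ := fun q k =>
    Sum.casesOn q (fun r => A r k) (fun p => ⟪W p.1 k, d p.2⟫) with hb_def
  have hb : ∀ q, ∃ M, ∀ i, |b q i| ≤ M := by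
    rintro (r | ⟨r, q⟩)
    · exact ⟨C, fun i => abs_le.mpr ⟨by linarith [hA_nonneg r i], hA_le r i⟩⟩
    · refine ⟨Breal r * ‖d q‖, fun i => ?_⟩
      refine (abs_real_inner_le_norm _ _).trans ?_
      exact mul_le_mul_of_nonneg_right (hWnorm r i) (norm_nonneg _)
  obtain ⟨φ0, hφ0mono, L, hL⟩ := bw_diag b hb
  -- limits of the tail masses
  set a : ℕ → ℝ := fun r => L (Sum.inl r) with ha_def
  have ha : ∀ r, Tendsto (fun i => A r (φ0 i)) atTop (𝓝 (a r)) := fun r => hL (Sum.inl r)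
  have ha_anti : Antitone a := by
    refine antitone_nat_of_succ_le fun r => ?_
    exact le_of_tendsto_of_tendsto' (ha (r + 1)) (ha r)
      (fun i => hA_anti r (r + 1) _ (by omega))
  have ha_nonneg : ∀ r, 0 ≤ a r := fun r =>
    ge_of_tendsto (ha r) (Eventually.of_forall fun i => hA_nonneg r _)
  set α : ℝ := ⨅ r, a r with hα_def
  have hbdd_below : BddBelow (Set.range a) := ⟨0, by rintro x ⟨r, rfl⟩; exact ha_nonneg r⟩
  have hα_le : ∀ r, α ≤ a r := fun r => ciInf_le hbdd_below r
  have hα0 : 0 ≤ α := le_ciInf ha_nonneg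
  -- weak L² limits of the truncations
  have hweak : ∀ r : ℕ, ∃ v : H, ∀ g : H,
      Tendsto (fun i => ⟪W r (φ0 i), g⟫) atTop (𝓝 ⟪v, g⟫) := by
    intro r
    exact hilbert_weak (fun i => W r (φ0 i)) (Breal r) (fun i => hWnorm r _) d hd
      (fun q => ⟨L (Sum.inr (r, q)), hL (Sum.inr (r, q))⟩)
  choose v hv using hweak

  -- L¹ elements associated with the weak limits
  have hVmem : ∀ r : ℕ, MemLp (fun x => (v r : _ → _) x) 1 μ := fun r =>
    (Lp.memLp (v r)).mono_exponent (by norm_num)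
  set V : ℕ → Lp (EuclideanSpace ℝ (Fin m)) 1 μ := fun r => (hVmem r).toLp _ with hV_def
  -- key L¹ estimate between consecutive weak limits
  have hVdiff : ∀ r s : ℕ, r ≤ s → ‖V s - V r‖ ≤ a r - a s := by
    intro r s hrs
    set u : _ → EuclideanSpace ℝ (Fin m) := fun x => (v s : _ → _) x - (v r : _ → _) x
      with hu_def
    have hu_aesm : AEStronglyMeasurable u μ :=
      (Lp.aestronglyMeasurable (v s)).sub (Lp.aestronglyMeasurable (v r))
    set ub := hu_aesm.mk u with hub_def
    have hub_sm : StronglyMeasurable ub := hu_aesm.stronglyMeasurable_mk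
    have hub_eq : u =ᵐ[μ] ub := hu_aesm.ae_eq_mk
    set g0 : _ → EuclideanSpace ℝ (Fin m) := fun x => ‖ub x‖⁻¹ • ub x with hg0_def
    have hg0_sm : StronglyMeasurable g0 :=
      (hub_sm.measurable.norm.inv.smul hub_sm.measurable).stronglyMeasurable
    have hg0_bd : ∀ x, ‖g0 x‖ ≤ 1 := by
      intro x
      by_cases h : ub x = 0
      · simp [hg0_def, h]
      · rw [hg0_def]
        simp only
        rw [norm_smul, norm_inv, norm_norm, inv_mul_cancel₀ (norm_ne_zero_iff.mpr h)]
    have hg0mem : MemLp g0 2 μ :=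
      MemLp.of_bound hg0_sm.aestronglyMeasurable 1 (ae_of_all _ hg0_bd)
    set G0 : H := hg0mem.toLp _ with hG0_def
    have hG0coe : (G0 : _ → _) =ᵐ[μ] g0 := hg0mem.coeFn_toLp
    have hg0inner : ∀ x, ⟪g0 x, ub x⟫ = ‖ub x‖ := by
      intro x
      by_cases h : ub x = 0
      · simp [hg0_def, h]
      · rw [hg0_def]
        simp only
        rw [real_inner_smul_left, real_inner_self_eq_norm_sq, sq]
        field_simp
    have hinner_eq : ⟪(v s - v r : H), G0⟫ = ∫ x, ‖u x‖ ∂μ := by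
      rw [real_inner_comm, MeasureTheory.L2.inner_def]
      refine integral_congr_ae ?_
      filter_upwards [hG0coe, Lp.coeFn_sub (v s) (v r), hub_eq] with x h1 h2 h3
      rw [h1, h2, Pi.sub_apply]
      show ⟪g0 x, u x⟫ = ‖u x‖
      rw [h3, hg0inner x, ← h3]
    have hlim1 : Tendsto (fun i => ⟪W s (φ0 i), G0⟫ - ⟪W r (φ0 i), G0⟫) atTop
        (𝓝 (∫ x, ‖u x‖ ∂μ)) := by
      rw [← hinner_eq, inner_sub_left]
      exact (hv s G0).sub (hv r G0)
    have hbound : ∀ k, ⟪W s k, G0⟫ - ⟪W r k, G0⟫ ≤ A r k - A s k := by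
      intro k
      have h1 : ⟪W s k, G0⟫ - ⟪W r k, G0⟫ =
          ∫ x, ⟪trunc (s : ℝ) (z k x) - trunc (r : ℝ) (z k x), g0 x⟫ ∂μ := by
        rw [← inner_sub_left, MeasureTheory.L2.inner_def]
        refine integral_congr_ae ?_
        filter_upwards [hG0coe, Lp.coeFn_sub (W s k) (W r k),
          (hWmem s k).coeFn_toLp, (hWmem r k).coeFn_toLp] with x h1 h2 h3 h4
        rw [h1, h2, Pi.sub_apply]
        simp only [hW_def]
        rw [h3, h4]
      have habs : ∀ x, |⟪trunc (s : ℝ) (z k x) - trunc (r : ℝ) (z k x), g0 x⟫| ≤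
          max (‖z k x‖ - (r : ℝ)) 0 - max (‖z k x‖ - (s : ℝ)) 0 := by
        intro x
        refine (abs_real_inner_le_norm _ _).trans ?_
        have h1 : ‖trunc (s : ℝ) (z k x) - trunc (r : ℝ) (z k x)‖ * ‖g0 x‖
            ≤ ‖trunc (s : ℝ) (z k x) - trunc (r : ℝ) (z k x)‖ * 1 :=
          mul_le_mul_of_nonneg_left (hg0_bd x) (norm_nonneg _)
        rw [mul_one] at h1
        refine h1.trans ?_
        rw [norm_trunc_sub_trunc (Nat.cast_nonneg r) (by exact_mod_cast hrs)]
      have hptwise : ∀ x, ⟪trunc (s : ℝ) (z k x) - trunc (r : ℝ) (z k x), g0 x⟫ ≤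
          max (‖z k x‖ - (r : ℝ)) 0 - max (‖z k x‖ - (s : ℝ)) 0 :=
        fun x => (le_abs_self _).trans (habs x)
      have hint_rhs : Integrable (fun x => max (‖z k x‖ - (r : ℝ)) 0 -
          max (‖z k x‖ - (s : ℝ)) 0) μ := (haint _ _).sub (haint _ _)
      have hint_lhs : Integrable
          (fun x => ⟪trunc (s : ℝ) (z k x) - trunc (r : ℝ) (z k x), g0 x⟫) μ := by
        refine Integrable.mono' hint_rhs ?_ (ae_of_all _ fun x => ?_)
        · exact ((aestronglyMeasurable_trunc (hsm k) _).sub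
            (aestronglyMeasurable_trunc (hsm k) _)).inner hg0_sm.aestronglyMeasurable
        · exact (habs x)
      rw [h1]
      calc ∫ x, ⟪trunc (s : ℝ) (z k x) - trunc (r : ℝ) (z k x), g0 x⟫ ∂μ
          ≤ ∫ x, (max (‖z k x‖ - (r : ℝ)) 0 - max (‖z k x‖ - (s : ℝ)) 0) ∂μ :=
            integral_mono hint_lhs hint_rhs hptwise
        _ = A r k - A s k := integral_sub (haint _ _) (haint _ _)
    have hkey : ∫ x, ‖u x‖ ∂μ ≤ a r - a s :=
      le_of_tendsto_of_tendsto' hlim1 ((ha r).sub (ha s)) (fun i => hbound (φ0 i))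
    have hnorm_eq : ‖V s - V r‖ = ∫ x, ‖u x‖ ∂μ := by
      rw [MeasureTheory.L1.norm_eq_integral_norm]
      refine integral_congr_ae ?_
      filter_upwards [Lp.coeFn_sub (V s) (V r), (hVmem s).coeFn_toLp, (hVmem r).coeFn_toLp]
        with x h1 h2 h3
      rw [h1, Pi.sub_apply]
      simp only [hV_def]
      rw [h2, h3]
    rw [hnorm_eq]
    exact hkey
  -- Cauchy sequence, limit in L¹
  have hVcauchy : CauchySeq V := by
    rw [Metric.cauchySeq_iff']
    intro ε hε
    obtain ⟨R0, hR0⟩ := exists_lt_of_ciInf_lt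
      (show ⨅ r, a r < α + ε / 2 by rw [← hα_def]; linarith)
    refine ⟨R0, fun n hn => ?_⟩
    rw [dist_eq_norm]
    have h1 := hVdiff R0 n hn
    have h2 := hα_le n
    calc ‖V n - V R0‖ ≤ a R0 - a n := h1
      _ < ε := by linarith
  obtain ⟨ZL, hZL⟩ := cauchySeq_tendsto_of_complete hVcauchy
  set zl : _ → EuclideanSpace ℝ (Fin m) := fun x => (ZL : _ → _) x with hzl_def
  have hzl_int : Integrable zl μ := L1.integrable_coeFn ZL
  set D : ℕ → ℝ := fun r => ‖V r - ZL‖ with hD_def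
  have hD0 : Tendsto D atTop (𝓝 0) := by
    have h := tendsto_iff_dist_tendsto_zero.mp hZL
    simpa [hD_def, dist_eq_norm] using h
  have hDeq : ∀ r, D r = ∫ x, ‖(v r : _ → _) x - zl x‖ ∂μ := by
    intro r
    rw [hD_def]
    simp only
    rw [MeasureTheory.L1.norm_eq_integral_norm]
    refine integral_congr_ae ?_
    filter_upwards [Lp.coeFn_sub (V r) ZL, (hVmem r).coeFn_toLp] with x h1 h2
    rw [h1, Pi.sub_apply]
    simp only [hV_def]
    rw [h2]

  -- choice of truncation levels
  have hρex : ∀ j : ℕ, ∃ r : ℕ, a r < α + ((2:ℝ)^j)⁻¹ := by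
    intro j
    refine exists_lt_of_ciInf_lt ?_
    rw [← hα_def]
    have : (0:ℝ) < ((2:ℝ)^j)⁻¹ := by positivity
    linarith
  choose ρ hρ using hρex
  set R : ℕ → ℕ := fun j => (Finset.range (j+1)).sup ρ + ⌈(C+1) * 2^j⌉₊ with hR_def
  have hRmono : Monotone R := by
    intro i j hij
    rw [hR_def]
    simp only
    refine add_le_add (Finset.sup_mono (Finset.range_subset_range.mpr (by omega))) ?_
    refine Nat.ceil_le_ceil ?_
    have h1 : (2:ℝ)^i ≤ 2^j := by
      apply pow_le_pow_right₀ (by norm_num) hij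
    nlinarith
  have hρR : ∀ j, ρ j ≤ R j := fun j =>
    le_trans (Finset.le_sup (Finset.self_mem_range_succ j)) (Nat.le_add_right _ _)
  have haR : ∀ j, a (R j) < α + ((2:ℝ)^j)⁻¹ := fun j =>
    lt_of_le_of_lt (ha_anti (hρR j)) (hρ j)
  have hRge : ∀ j, (C+1) * 2^j ≤ (R j : ℝ) := by
    intro j
    calc (C+1) * 2^j ≤ (⌈(C+1) * 2^j⌉₊ : ℝ) := Nat.le_ceil _
      _ ≤ ((R j : ℕ) : ℝ) := by
          have h : ⌈(C+1) * 2^j⌉₊ ≤ R j := Nat.le_add_left _ _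
          exact_mod_cast h
  have hRpos : ∀ j, 0 < (R j : ℝ) := by
    intro j
    have h1 := hRge j
    have h2 : (0:ℝ) < (C+1) * 2^j := by positivity
    linarith
  have hRtop : Tendsto R atTop atTop := by
    refine tendsto_atTop_mono (fun j => ?_) tendsto_id
    show (id j : ℕ) ≤ R j
    have h1 : ((j:ℝ)) ≤ (R j : ℝ) := by
      have h2 : ((j:ℝ)) ≤ 2^j := by
        exact_mod_cast (Nat.lt_two_pow_self (n := j)).le
      have h3 : (2:ℝ)^j ≤ (C+1) * 2^j := by nlinarith [hC0, pow_pos (show (0:ℝ) < 2 by norm_num) j]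
      linarith [hRge j]
    exact_mod_cast h1
  -- choice of indices
  have hNex : ∀ j : ℕ, ∃ N, ∀ i ≥ N, |A (R j) (φ0 i) - a (R j)| ≤ ((2:ℝ)^j)⁻¹ := by
    intro j
    have h := Metric.tendsto_atTop.mp (ha (R j)) (((2:ℝ)^j)⁻¹) (by positivity)
    obtain ⟨N, hN⟩ := h
    exact ⟨N, fun i hi => le_of_lt (by rw [← Real.dist_eq]; exact hN i hi)⟩
  choose N' hN' using hNex
  set Nseq : ℕ → ℕ := fun j => Nat.rec (N' 0) (fun j ih => max (ih + 1) (N' (j+1))) j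
    with hNseq_def
  have hNseq_succ : ∀ j, Nseq j < Nseq (j+1) := fun j =>
    lt_of_lt_of_le (Nat.lt_succ_self _) (le_max_left _ _)
  have hNseq_mono : StrictMono Nseq := strictMono_nat_of_lt_succ hNseq_succ
  have hNseq_ge : ∀ j, N' j ≤ Nseq j := by
    intro j
    cases j with
    | zero => exact le_rfl
    | succ j => exact le_max_right _ _
  set ψ : ℕ → ℕ := fun j => φ0 (Nseq j) with hψ_def
  have hψmono : StrictMono ψ := hφ0mono.comp hNseq_mono
  have hAclose : ∀ j' j, j' ≤ j → |A (R j') (ψ j) - a (R j')| ≤ ((2:ℝ)^j')⁻¹ :=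
    fun j' j h => hN' j' _ (le_trans (hNseq_ge j') (hNseq_mono.monotone h))
  -- the bad sets
  set Fset : ℕ → Set (EuclideanSpace ℝ (Fin n)) := fun j =>
    Ω ∩ {x | (R j : ℝ) < ‖zsm (ψ j) x‖} with hF_def
  have hSmeas : ∀ j, MeasurableSet {x | (R j : ℝ) < ‖zsm (ψ j) x‖} := fun j =>
    measurableSet_lt measurable_const (hzsm _).measurable.norm
  have hFmeas : ∀ j, MeasurableSet (Fset j) := fun j => hΩm.inter (hSmeas j)
  have hFsubΩ : ∀ j, Fset j ⊆ Ω := fun j => Set.inter_subset_left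
  have hFmeasure : ∀ j, volume (Fset j) ≤ ENNReal.ofReal (((2:ℝ)^j)⁻¹) := by
    intro j
    set S := {x | (R j : ℝ) < ‖zsm (ψ j) x‖} with hS_def
    have hvol : volume (Fset j) = μ S := by
      rw [hμ, Measure.restrict_apply (hSmeas j), hF_def]
      simp only
      rw [Set.inter_comm]
    have hkey : (μ S).toReal * (R j : ℝ) ≤ C := by
      have h1 : ∫ x, S.indicator (fun _ => (R j : ℝ)) x ∂μ = (μ S).toReal * (R j : ℝ) := by
        rw [integral_indicator_const _ (hSmeas j)]
        simp [smul_eq_mul]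
        exact Or.inl rfl
      have h2 : S.indicator (fun _ => (R j : ℝ)) ≤ᵐ[μ] fun x => ‖z (ψ j) x‖ := by
        filter_upwards [heq (ψ j)] with x hx
        by_cases hxS : x ∈ S
        · rw [Set.indicator_of_mem hxS]
          have : (R j : ℝ) < ‖zsm (ψ j) x‖ := hxS
          rw [hx]
          exact this.le
        · rw [Set.indicator_of_notMem hxS]
          exact norm_nonneg _
      have h3 := integral_mono_of_nonneg
        (ae_of_all _ fun x => Set.indicator_nonneg (fun _ _ => (hRpos j).le) x)
        (hint (ψ j)).norm h2
      rw [h1] at h3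
      exact h3.trans (hC (ψ j))
    rw [hvol]
    have hfin : (μ S).toReal ≤ C / (R j : ℝ) := by
      rw [le_div_iff₀ (hRpos j)]
      exact hkey
    have h5 : C / (R j : ℝ) ≤ ((2:ℝ)^j)⁻¹ := by
      rw [div_le_iff₀ (hRpos j)]
      have h6 : ((2:ℝ)^j)⁻¹ * ((C+1)*2^j) = C + 1 := by field_simp
      have h7 : ((2:ℝ)^j)⁻¹ * ((C+1)*2^j) ≤ ((2:ℝ)^j)⁻¹ * (R j : ℝ) := by
        refine mul_le_mul_of_nonneg_left (hRge j) (by positivity)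
      linarith
    calc μ S = ENNReal.ofReal ((μ S).toReal) := (ENNReal.ofReal_toReal (measure_ne_top μ S)).symm
      _ ≤ ENNReal.ofReal (((2:ℝ)^j)⁻¹) := ENNReal.ofReal_le_ofReal (hfin.trans h5)
  -- the nested biting sets
  set Ωs : ℕ → Set (EuclideanSpace ℝ (Fin n)) := fun l => ⋃ i : ℕ, Fset (i + l) with hΩs_def
  have hΩs_meas : ∀ l, MeasurableSet (Ωs l) := fun l => MeasurableSet.iUnion fun i => hFmeas _
  have hΩs_sub : ∀ l, Ωs l ⊆ Ω := fun l => Set.iUnion_subset fun i => hFsubΩ _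
  have hΩs_nested : ∀ l, Ωs (l+1) ⊆ Ωs l := by
    intro l
    refine Set.iUnion_subset fun i => ?_
    have h : i + (l+1) = (i+1) + l := by omega
    rw [h]
    exact Set.subset_iUnion (fun i => Fset (i + l)) (i+1)
  have hFΩs : ∀ l j, l ≤ j → Fset j ⊆ Ωs l := by
    intro l j h
    have h2 : (j - l) + l = j := by omega
    have := Set.subset_iUnion (fun i => Fset (i + l)) (j - l)
    rw [h2] at this
    exact this
  set q : ℝ≥0∞ := ENNReal.ofReal 2⁻¹ with hq_def
  have hq1 : q < 1 := by
    rw [hq_def]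
    exact ENNReal.ofReal_lt_one.mpr (by norm_num)
  have hFq : ∀ j, volume (Fset j) ≤ q ^ j := by
    intro j
    refine (hFmeasure j).trans ?_
    rw [hq_def, ← ENNReal.ofReal_pow (by norm_num : (0:ℝ) ≤ 2⁻¹)]
    refine ENNReal.ofReal_le_ofReal ?_
    rw [inv_pow]
  have hsum : ∀ l, volume (Ωs l) ≤ q^l * (1 - q)⁻¹ := by
    intro l
    calc volume (Ωs l) ≤ ∑' i, volume (Fset (i + l)) := measure_iUnion_le _
      _ ≤ ∑' i : ℕ, q^(i+l) := ENNReal.tsum_le_tsum fun i => hFq _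
      _ = (∑' i : ℕ, q^i) * q^l := by
          simp_rw [pow_add]
          exact ENNReal.tsum_mul_right
      _ = (1-q)⁻¹ * q^l := by rw [ENNReal.tsum_geometric]
      _ = q^l * (1-q)⁻¹ := mul_comm _ _
  have hΩs_tendsto : Tendsto (fun l => volume (Ωs l)) atTop (𝓝 0) := by
    have h1 : Tendsto (fun l => q^l * (1-q)⁻¹) atTop (𝓝 (0 * (1-q)⁻¹)) := by
      refine ENNReal.Tendsto.mul_const (ENNReal.tendsto_pow_atTop_nhds_zero_of_lt_one hq1) ?_
      exact Or.inr (ENNReal.inv_ne_top.mpr (tsub_pos_of_lt hq1).ne')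
    rw [zero_mul] at h1
    exact tendsto_of_tendsto_of_tendsto_of_le_of_le tendsto_const_nhds h1
      (fun l => zero_le) hsum

  -- ASSEMBLY
  refine ⟨ψ, hψmono, zl, hzl_int, Ωs, fun l => ⟨hΩs_meas l, hΩs_sub l⟩, hΩs_nested,
    hΩs_tendsto, ?_⟩
  intro l g hg hgbdd
  obtain ⟨M0, hM0⟩ := hgbdd
  set M : ℝ := max M0 0 with hM_def
  have hM0' : ∀ᵐ x ∂μ, ‖g x‖ ≤ M := hM0.mono fun x hx => hx.trans (le_max_left _ _)
  have hMnn : 0 ≤ M := le_max_right _ _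
  set S := Ω \ Ωs l with hS_def
  have hSmeas' : MeasurableSet S := hΩm.diff (hΩs_meas l)
  set gS := S.indicator g with hgS_def
  have hgS_aesm : AEStronglyMeasurable gS μ := hg.indicator hSmeas'
  have hgS_bd : ∀ᵐ x ∂μ, ‖gS x‖ ≤ M := by
    filter_upwards [hM0'] with x hx
    rw [hgS_def]
    by_cases hxS : x ∈ S
    · rw [Set.indicator_of_mem hxS]; exact hx
    · rw [Set.indicator_of_notMem hxS]; simpa using hMnn
  have hgSmem : MemLp gS 2 μ := MemLp.of_bound hgS_aesm M hgS_bd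
  set GS : H := hgSmem.toLp _ with hGS_def
  have hGScoe : (GS : _ → _) =ᵐ[μ] gS := hgSmem.coeFn_toLp
  -- rewriting the set integrals
  have hconv_int : ∀ u : EuclideanSpace ℝ (Fin n) → EuclideanSpace ℝ (Fin m),
      ∫ x in S, ⟪g x, u x⟫ ∂volume = ∫ x, ⟪gS x, u x⟫ ∂μ := by
    intro u
    have h1 : ∫ x, ⟪gS x, u x⟫ ∂μ = ∫ x, S.indicator (fun x => ⟪g x, u x⟫) x ∂μ := by
      refine integral_congr_ae (ae_of_all _ fun x => ?_)
      show ⟪gS x, u x⟫ = S.indicator (fun x => ⟪g x, u x⟫) x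
      rw [hgS_def]
      by_cases hxS : x ∈ S
      · rw [Set.indicator_of_mem hxS, Set.indicator_of_mem hxS]
      · rw [Set.indicator_of_notMem hxS, Set.indicator_of_notMem hxS, inner_zero_left]
    rw [h1, integral_indicator hSmeas', hμ, Measure.restrict_restrict hSmeas',
      Set.inter_eq_self_of_subset_left (show S ⊆ Ω from hS_def ▸ Set.diff_subset)]
  -- integrability of inner products
  have inner_int : ∀ u : EuclideanSpace ℝ (Fin n) → EuclideanSpace ℝ (Fin m),
      Integrable u μ → Integrable (fun x => ⟪gS x, u x⟫) μ := by
    intro u hu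
    refine Integrable.mono' (hu.norm.const_mul M) (hgS_aesm.inner hu.aestronglyMeasurable) ?_
    filter_upwards [hgS_bd] with x hx
    rw [Real.norm_eq_abs]
    exact (abs_real_inner_le_norm _ _).trans (mul_le_mul_of_nonneg_right hx (norm_nonneg _))
  -- the uniform tail estimate
  have hK : ∀ j' i : ℕ, j' ≤ i → l ≤ i →
      ∫ x, S.indicator (fun x => max (‖z (ψ i) x‖ - (R j' : ℝ)) 0) x ∂μ
        ≤ 3 * ((2:ℝ)^j')⁻¹ := by
    intro j' i hj' hli
    have hswitch : ∫ x, S.indicator (fun x => max (‖z (ψ i) x‖ - (R j' : ℝ)) 0) x ∂μ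
        = ∫ x, S.indicator (fun x => max (‖zsm (ψ i) x‖ - (R j' : ℝ)) 0) x ∂μ := by
      refine integral_congr_ae ?_
      filter_upwards [heq (ψ i)] with x hx
      by_cases hxS : x ∈ S
      · rw [Set.indicator_of_mem hxS, Set.indicator_of_mem hxS, hx]
      · rw [Set.indicator_of_notMem hxS, Set.indicator_of_notMem hxS]
    have haint' : ∀ t : ℝ, Integrable (fun x => max (‖zsm (ψ i) x‖ - t) 0) μ := by
      intro t
      refine (haint t (ψ i)).congr ?_
      filter_upwards [heq (ψ i)] with x hx
      rw [hx]
    have hind_int : ∀ (t : ℝ) (T : Set (EuclideanSpace ℝ (Fin n))), MeasurableSet T →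
        Integrable (T.indicator (fun x => max (‖zsm (ψ i) x‖ - t) 0)) μ :=
      fun t T hT => (haint' t).indicator hT
    have hstep1 : S.indicator (fun x => max (‖zsm (ψ i) x‖ - (R j' : ℝ)) 0)
        ≤ (Fset i)ᶜ.indicator (fun x => max (‖zsm (ψ i) x‖ - (R j' : ℝ)) 0) := by
      refine Set.indicator_le_indicator_of_subset ?_ (fun x => le_max_right _ _)
      intro y hy
      rw [hS_def] at hy
      exact fun hyF => hy.2 (hFΩs l i hli hyF)
    have hsplit : ∫ x, (Fset i)ᶜ.indicator (fun x => max (‖zsm (ψ i) x‖ - (R j' : ℝ)) 0) x ∂μ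
        = (∫ x, max (‖zsm (ψ i) x‖ - (R j' : ℝ)) 0 ∂μ)
          - ∫ x, (Fset i).indicator (fun x => max (‖zsm (ψ i) x‖ - (R j' : ℝ)) 0) x ∂μ := by
      rw [eq_sub_iff_add_eq, ← integral_add (hind_int _ _ (hFmeas i).compl)
        (hind_int _ _ (hFmeas i))]
      refine integral_congr_ae (ae_of_all _ fun x => ?_)
      exact congrFun (Set.indicator_compl_add_self (Fset i)
        (fun x => max (‖zsm (ψ i) x‖ - (R j' : ℝ)) 0)) x
    have hAzsm : ∀ t : ℕ, ∫ x, max (‖zsm (ψ i) x‖ - (t : ℝ)) 0 ∂μ = A t (ψ i) := by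
      intro t
      refine integral_congr_ae ?_
      filter_upwards [heq (ψ i)] with x hx
      rw [hx]
    have hup : ∫ x, max (‖zsm (ψ i) x‖ - (R j' : ℝ)) 0 ∂μ ≤ α + 2 * ((2:ℝ)^j')⁻¹ := by
      have h2 := abs_le.mp (hAclose j' i hj')
      have h3 := haR j'
      rw [hAzsm (R j')]
      linarith [h2.2]
    have hlow : ∫ x, max (‖zsm (ψ i) x‖ - (R i : ℝ)) 0 ∂μ ≤
        ∫ x, (Fset i).indicator (fun x => max (‖zsm (ψ i) x‖ - (R j' : ℝ)) 0) x ∂μ := by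
      refine integral_mono_ae (haint' _) (hind_int _ _ (hFmeas i)) ?_
      have hmem : ∀ᵐ x ∂μ, x ∈ Ω := by
        rw [hμ]; exact ae_restrict_mem hΩm
      filter_upwards [hmem] with x hxΩ
      by_cases hxF : x ∈ Fset i
      · rw [Set.indicator_of_mem hxF]
        refine max_le_max (sub_le_sub_left ?_ _) le_rfl
        exact_mod_cast hRmono hj'
      · rw [Set.indicator_of_notMem hxF]
        have hble : ‖zsm (ψ i) x‖ ≤ (R i : ℝ) := by
          by_contra hcon
          exact hxF ⟨hxΩ, not_le.mp hcon⟩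
        exact max_le (sub_nonpos.mpr hble) le_rfl
    have h5 : α - ((2:ℝ)^i)⁻¹ ≤ A (R i) (ψ i) := by
      have h6 := abs_le.mp (hAclose i i le_rfl)
      have h7 := hα_le (R i)
      linarith [h6.1]
    have hpow : ((2:ℝ)^i)⁻¹ ≤ ((2:ℝ)^j')⁻¹ := by
      refine inv_anti₀ (by positivity) ?_
      exact pow_le_pow_right₀ (by norm_num) hj'
    rw [hswitch]
    calc ∫ x, S.indicator (fun x => max (‖zsm (ψ i) x‖ - (R j' : ℝ)) 0) x ∂μ
        ≤ ∫ x, (Fset i)ᶜ.indicator (fun x => max (‖zsm (ψ i) x‖ - (R j' : ℝ)) 0) x ∂μ :=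
          integral_mono (hind_int _ _ hSmeas') (hind_int _ _ (hFmeas i).compl) hstep1
      _ = _ - _ := hsplit
      _ ≤ (α + 2 * ((2:ℝ)^j')⁻¹) - (α - ((2:ℝ)^i)⁻¹) := by
          have := (hAzsm (R i)) ▸ hlow
          linarith [hup, h5]
      _ ≤ 3 * ((2:ℝ)^j')⁻¹ := by linarith
  -- identification of inner products with integrals
  have hGSW : ∀ r k : ℕ, ⟪W r k, GS⟫ = ∫ x, ⟪gS x, trunc (r:ℝ) (z k x)⟫ ∂μ := by
    intro r k
    rw [real_inner_comm, MeasureTheory.L2.inner_def]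
    refine integral_congr_ae ?_
    filter_upwards [hGScoe, (hWmem r k).coeFn_toLp] with x h1 h2
    rw [h1]
    simp only [hW_def]
    rw [h2]
  have hGSv : ∀ r : ℕ, ⟪v r, GS⟫ = ∫ x, ⟪gS x, (v r : _ → _) x⟫ ∂μ := by
    intro r
    rw [real_inner_comm, MeasureTheory.L2.inner_def]
    refine integral_congr_ae ?_
    filter_upwards [hGScoe] with x h1
    rw [h1]
  -- the middle-term convergence
  have hT2 : ∀ r : ℕ, Tendsto (fun i => ∫ x, ⟪gS x, trunc (r:ℝ) (z (ψ i) x)⟫ ∂μ) atTop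
      (𝓝 ⟪v r, GS⟫) := by
    intro r
    have h1 := (hv r GS).comp hNseq_mono.tendsto_atTop
    exact h1.congr fun i => hGSW r (φ0 (Nseq i))
  -- third term bound
  have hvint : ∀ r : ℕ, Integrable (fun x => (v r : _ → _) x) μ :=
    fun r => memLp_one_iff_integrable.mp (hVmem r)
  have hT3 : ∀ r : ℕ, |⟪v r, GS⟫ - ∫ x, ⟪gS x, zl x⟫ ∂μ| ≤ M * D r := by
    intro r
    rw [hGSv r, ← integral_sub (inner_int _ (hvint r)) (inner_int _ hzl_int)]
    have hcombine : (fun x => ⟪gS x, (v r : _ → _) x⟫ - ⟪gS x, zl x⟫)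
        = fun x => ⟪gS x, (v r : _ → _) x - zl x⟫ :=
      funext fun x => (inner_sub_right _ _ _).symm
    rw [hcombine]
    calc |∫ x, ⟪gS x, (v r : _ → _) x - zl x⟫ ∂μ|
        ≤ ∫ x, M * ‖(v r : _ → _) x - zl x‖ ∂μ := by
          rw [← Real.norm_eq_abs]
          refine (norm_integral_le_integral_norm _).trans ?_
          refine integral_mono_of_nonneg (ae_of_all _ fun x => norm_nonneg _)
            (((hvint r).sub hzl_int).norm.const_mul M) ?_
          filter_upwards [hgS_bd] with x hx
          rw [Real.norm_eq_abs]
          exact (abs_real_inner_le_norm _ _).trans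
            (mul_le_mul_of_nonneg_right hx (norm_nonneg _))
      _ = M * D r := by rw [integral_const_mul, ← hDeq r]
  -- first term bound
  have hT1 : ∀ j' i : ℕ, j' ≤ i → l ≤ i →
      |(∫ x, ⟪gS x, z (ψ i) x⟫ ∂μ) - ∫ x, ⟪gS x, trunc ((R j' : ℝ)) (z (ψ i) x)⟫ ∂μ|
        ≤ M * (3 * ((2:ℝ)^j')⁻¹) := by
    intro j' i hj' hli
    have htr_int : Integrable (fun x => trunc ((R j' : ℝ)) (z (ψ i) x)) μ :=
      (hWmem (R j') (ψ i)).integrable (by norm_num)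
    rw [← integral_sub (inner_int _ (hint (ψ i))) (inner_int _ htr_int)]
    have hcombine : (fun x => ⟪gS x, z (ψ i) x⟫ - ⟪gS x, trunc ((R j' : ℝ)) (z (ψ i) x)⟫)
        = fun x => ⟪gS x, z (ψ i) x - trunc ((R j' : ℝ)) (z (ψ i) x)⟫ :=
      funext fun x => (inner_sub_right _ _ _).symm
    rw [hcombine]
    calc |∫ x, ⟪gS x, z (ψ i) x - trunc ((R j' : ℝ)) (z (ψ i) x)⟫ ∂μ|
        ≤ ∫ x, M * S.indicator (fun x => max (‖z (ψ i) x‖ - (R j' : ℝ)) 0) x ∂μ := by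
          rw [← Real.norm_eq_abs]
          refine (norm_integral_le_integral_norm _).trans ?_
          refine integral_mono_of_nonneg (ae_of_all _ fun x => norm_nonneg _)
            (((haint _ _).indicator hSmeas').const_mul M) ?_
          filter_upwards [hM0'] with x hx
          rw [Real.norm_eq_abs]
          show |⟪gS x, z (ψ i) x - trunc ((R j' : ℝ)) (z (ψ i) x)⟫| ≤
            M * S.indicator (fun x => max (‖z (ψ i) x‖ - (R j' : ℝ)) 0) x
          by_cases hxS : x ∈ S
          · have hgSle : ‖gS x‖ ≤ M := by
              rw [hgS_def, Set.indicator_of_mem hxS]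
              exact hx
            rw [Set.indicator_of_mem hxS]
            refine (abs_real_inner_le_norm _ _).trans ?_
            exact mul_le_mul hgSle
              (le_of_eq (norm_sub_trunc (Nat.cast_nonneg _) _)) (norm_nonneg _) hMnn
          · have hgS0 : gS x = 0 := by rw [hgS_def]; exact Set.indicator_of_notMem hxS _
            rw [hgS0, inner_zero_left, abs_zero, Set.indicator_of_notMem hxS, mul_zero]
      _ = M * ∫ x, S.indicator (fun x => max (‖z (ψ i) x‖ - (R j' : ℝ)) 0) x ∂μ :=
          integral_const_mul _ _
      _ ≤ M * (3 * ((2:ℝ)^j')⁻¹) :=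
          mul_le_mul_of_nonneg_left (hK j' i hj' hli) hMnn
  -- the main convergence over μ
  have hmain : Tendsto (fun i => ∫ x, ⟪gS x, z (ψ i) x⟫ ∂μ) atTop
      (𝓝 (∫ x, ⟪gS x, zl x⟫ ∂μ)) := by
    rw [Metric.tendsto_atTop]
    intro ε hε
    have hsmall : Tendsto (fun j' : ℕ => M * (3 * ((2:ℝ)^j')⁻¹)) atTop (𝓝 0) := by
      have h1 : Tendsto (fun j' : ℕ => ((2:ℝ)^j')⁻¹) atTop (𝓝 0) :=
        tendsto_inv_atTop_zero.comp (tendsto_pow_atTop_atTop_of_one_lt one_lt_two)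
      have h2 := h1.const_mul (M * 3)
      rw [mul_zero] at h2
      refine h2.congr fun j' => by ring
    have hsmall2 : Tendsto (fun j' : ℕ => M * D (R j')) atTop (𝓝 0) := by
      have h2 := (hD0.comp hRtop).const_mul M
      rw [mul_zero] at h2
      exact h2
    obtain ⟨j', hj'1, hj'2⟩ := ((hsmall.eventually_lt_const
      (show (0:ℝ) < ε/3 by linarith)).and
      (hsmall2.eventually_lt_const (show (0:ℝ) < ε/3 by linarith))).exists
    obtain ⟨I2, hI2⟩ := Metric.tendsto_atTop.mp (hT2 (R j')) (ε/3) (by linarith)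
    refine ⟨max (max l j') I2, fun i hi => ?_⟩
    have hil : l ≤ i := le_trans (le_trans (le_max_left _ _) (le_max_left _ _)) hi
    have hij' : j' ≤ i := le_trans (le_trans (le_max_right _ _) (le_max_left _ _)) hi
    have hiI2 : I2 ≤ i := le_trans (le_max_right _ _) hi
    have h1 := hT1 j' i hij' hil
    have h2 := hI2 i hiI2
    have h3 := hT3 (R j')
    rw [Real.dist_eq]
    rw [Real.dist_eq] at h2
    have hdecomp : (∫ x, ⟪gS x, z (ψ i) x⟫ ∂μ) - ∫ x, ⟪gS x, zl x⟫ ∂μ =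
        ((∫ x, ⟪gS x, z (ψ i) x⟫ ∂μ) - ∫ x, ⟪gS x, trunc ((R j' : ℝ)) (z (ψ i) x)⟫ ∂μ)
        + ((∫ x, ⟪gS x, trunc ((R j' : ℝ)) (z (ψ i) x)⟫ ∂μ) - ⟪v (R j'), GS⟫)
        + (⟪v (R j'), GS⟫ - ∫ x, ⟪gS x, zl x⟫ ∂μ) := by ring
    rw [hdecomp]
    calc |_ + _ + _| ≤ |(∫ x, ⟪gS x, z (ψ i) x⟫ ∂μ)
          - ∫ x, ⟪gS x, trunc ((R j' : ℝ)) (z (ψ i) x)⟫ ∂μ|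
        + |(∫ x, ⟪gS x, trunc ((R j' : ℝ)) (z (ψ i) x)⟫ ∂μ) - ⟪v (R j'), GS⟫|
        + |⟪v (R j'), GS⟫ - ∫ x, ⟪gS x, zl x⟫ ∂μ| :=
          (abs_add_le _ _).trans (add_le_add_left (abs_add_le _ _) _)
      _ < ε := by linarith
  have hfin := hmain.congr (fun i => (hconv_int (z (ψ i))).symm)
  rw [hconv_int zl]
  exact hfin
end
end

section
/- Let 1 ≤ p < +∞ and let f : ℝ^{m×n} → ℝ be continuous and positively p-homogeneous, i.e., f(tA) = t^p f(A) for all t ≥ 0 and A ∈ ℝ^{m×n}. Let u : ℝⁿ → ℝ^m be Lipschitz with support contained in the closed unit ball B(0,1), let ρ ∈ ℝⁿ be a unit vector, and set D_ρ := {x ∈ ℝⁿ : x·ρ < 0}. Let Ω ⊂ ℝⁿ be a bounded open set with 0 ∈ ∂Ω such that the blow-ups of Ω at 0 converge to the half-space D_ρ in measure: |((jΩ) Δ D_ρ) ∩ B(0,1)| → 0 as j → ∞, where jΩ = {jx : x ∈ Ω} and Δ denotes symmetric difference. Define u_j(x) := j^{(n−p)/p} u(jx). Then lim_{j→∞} ∫_Ω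 f(∇u_j(x)) dx = ∫_{D_ρ ∩ B(0,1)} f(∇u(y)) dy. -/
open MeasureTheory Filter Topology Metric Bornology
open scoped ENNReal NNReal RealInnerProductSpace
open scoped Pointwise

noncomputable section

section helpers

variable {n m : ℕ}

theorem grad_scale (u : EuclideanSpace ℝ (Fin n) → EuclideanSpace ℝ (Fin m))
    {c j : ℝ} (hc : c ≠ 0) (hj : j ≠ 0) (x : EuclideanSpace ℝ (Fin n)) :
    grad (fun y => c • u (j • y)) x = (c * j) • grad u (j • x) := by
  by_cases h : DifferentiableAt ℝ u (j • x)
  · have h1 : HasFDerivAt (fun y : EuclideanSpace ℝ (Fin n) => j • y)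
        (j • ContinuousLinearMap.id ℝ (EuclideanSpace ℝ (Fin n))) x :=
      (hasFDerivAt_id x).const_smul j
    have h2 : HasFDerivAt (fun y => u (j • y))
        ((fderiv ℝ u (j • x)).comp (j • ContinuousLinearMap.id ℝ (EuclideanSpace ℝ (Fin n)))) x :=
      (h.hasFDerivAt).comp x h1
    have h3 : HasFDerivAt (fun y => c • u (j • y)) _ x := h2.const_smul c
    rw [show (fun y => c • u (j • y)) = fun y => c • (fun z => u (j • z)) y from rfl]
    ext i k
    simp only [grad, Matrix.of_apply, h3.fderiv, Matrix.smul_apply]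
    simp [ContinuousLinearMap.smul_apply, _root_.map_smul, smul_smul, mul_comm, mul_assoc]
  · have h' : ¬ DifferentiableAt ℝ (fun y => c • u (j • y)) x := by
      intro hd
      have h2 : DifferentiableAt ℝ (fun y => u (j • y)) x := by
        have : DifferentiableAt ℝ (fun y => c⁻¹ • (c • u (j • y))) x := hd.const_smul c⁻¹
        simpa [smul_smul, inv_mul_cancel₀ hc] using this
      have h3 : DifferentiableAt ℝ (fun z : EuclideanSpace ℝ (Fin n) => j⁻¹ • z) (j • x) :=
        (differentiableAt_id.const_smul j⁻¹)
      have h4 : DifferentiableAt ℝ ((fun y => u (j • y)) ∘ (fun z : EuclideanSpace ℝ (Fin n) => j⁻¹ • z)) (j • x) := by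
        apply DifferentiableAt.comp
        · simpa [smul_smul, inv_mul_cancel₀ hj] using h2
        · exact h3
      have : ((fun y => u (j • y)) ∘ (fun z : EuclideanSpace ℝ (Fin n) => j⁻¹ • z)) = u := by
        ext z; simp [Function.comp, smul_smul, mul_inv_cancel₀ hj]
      rw [this] at h4
      exact h h4
    ext i k
    simp only [grad, Matrix.of_apply, fderiv_zero_of_not_differentiableAt h,
      fderiv_zero_of_not_differentiableAt h', Matrix.smul_apply]
    simp

theorem comp_grad_measurable (f : Matrix (Fin m) (Fin n) ℝ → ℝ) (hfc : Continuous f)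
    (u : EuclideanSpace ℝ (Fin n) → EuclideanSpace ℝ (Fin m)) :
    Measurable fun x => f (grad u x) := by
  letI : MeasurableSpace (Matrix (Fin m) (Fin n) ℝ) := borel _
  haveI : BorelSpace (Matrix (Fin m) (Fin n) ℝ) := ⟨rfl⟩
  have h1 : Measurable (fderiv ℝ u) := measurable_fderiv ℝ u
  have h2 : Continuous fun (L : EuclideanSpace ℝ (Fin n) →L[ℝ] EuclideanSpace ℝ (Fin m)) =>
      (Matrix.of fun i j => L (EuclideanSpace.single j 1) i : Matrix (Fin m) (Fin n) ℝ) := by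
    refine continuous_pi fun i => continuous_pi fun j => ?_
    exact (EuclideanSpace.proj (𝕜 := ℝ) i).continuous.comp
      ((ContinuousLinearMap.apply ℝ (EuclideanSpace ℝ (Fin m))
        (EuclideanSpace.single j (1:ℝ))).continuous)
  exact hfc.measurable.comp ((h2.measurable).comp h1)

theorem grad_entry_bound {u : EuclideanSpace ℝ (Fin n) → EuclideanSpace ℝ (Fin m)}
    {K : ℝ≥0} (hu : LipschitzWith K u) (x : EuclideanSpace ℝ (Fin n)) (i : Fin m) (j : Fin n) :
    |grad u x i j| ≤ K := by
  have hb : ‖fderiv ℝ u x‖ ≤ K := by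
    by_cases h : DifferentiableAt ℝ u x
    · exact norm_fderiv_le_of_lipschitz ℝ hu
    · simp [fderiv_zero_of_not_differentiableAt h]
  have h1 : |(fderiv ℝ u x (EuclideanSpace.single j 1)) i|
      ≤ ‖fderiv ℝ u x (EuclideanSpace.single j 1)‖ := by
    have := EuclideanSpace.inner_single_left (𝕜 := ℝ) i 1 (fderiv ℝ u x (EuclideanSpace.single j 1))
    calc |(fderiv ℝ u x (EuclideanSpace.single j 1)) i|
        = |⟪EuclideanSpace.single i (1:ℝ), fderiv ℝ u x (EuclideanSpace.single j 1)⟫| := by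
          rw [this]; simp
      _ ≤ ‖EuclideanSpace.single i (1:ℝ)‖ * ‖fderiv ℝ u x (EuclideanSpace.single j 1)‖ :=
          abs_real_inner_le_norm _ _
      _ = ‖fderiv ℝ u x (EuclideanSpace.single j 1)‖ := by
          rw [EuclideanSpace.norm_single]; simp
  calc |grad u x i j| ≤ ‖fderiv ℝ u x (EuclideanSpace.single j 1)‖ := h1
    _ ≤ ‖fderiv ℝ u x‖ * ‖EuclideanSpace.single j (1:ℝ)‖ := (fderiv ℝ u x).le_opNorm _
    _ ≤ K * 1 := by
        apply mul_le_mul hb _ (norm_nonneg _) K.coe_nonneg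
        rw [EuclideanSpace.norm_single]; simp
    _ = K := mul_one _

theorem grad_zero_outside {u : EuclideanSpace ℝ (Fin n) → EuclideanSpace ℝ (Fin m)}
    (hsupp : Function.support u ⊆ Metric.closedBall 0 1)
    {x : EuclideanSpace ℝ (Fin n)} (hx : x ∉ Metric.closedBall (0 : EuclideanSpace ℝ (Fin n)) 1) :
    grad u x = 0 := by
  have hopen : IsOpen (Metric.closedBall (0 : EuclideanSpace ℝ (Fin n)) 1)ᶜ :=
    Metric.isClosed_closedBall.isOpen_compl
  have hz : u =ᶠ[𝓝 x] fun _ => 0 := by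
    filter_upwards [hopen.mem_nhds hx] with y hy
    by_contra hne
    exact hy (hsupp (Function.mem_support.2 hne))
  have : fderiv ℝ u x = fderiv ℝ (fun _ : EuclideanSpace ℝ (Fin n) =>
      (0 : EuclideanSpace ℝ (Fin m))) x := hz.fderiv_eq
  ext i j
  simp [grad, this]

end helpers

/-- Scaling (blow-up) identity for positively `p`-homogeneous integrands: if `f` is
continuous with `f(tA) = t^p f(A)` for `t ≥ 0`, `u` is Lipschitz with support in the closed
unit ball, `ρ` is a unit vector, `Ω` is a bounded open set with `0 ∈ ∂Ω` whose blow-ups at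
`0` converge in measure to the half-space `D_ρ = {x·ρ < 0}`, and
`u_j(x) = j^{(n−p)/p} u(jx)`, then `∫_Ω f(∇u_j) → ∫_{D_ρ ∩ B(0,1)} f(∇u)`. -/
theorem stmt15 {m n : ℕ} (p : ℝ) (hp : 1 ≤ p)
    (f : Matrix (Fin m) (Fin n) ℝ → ℝ) (hfc : Continuous f)
    (hhom : ∀ t : ℝ, 0 ≤ t → ∀ A, f (t • A) = t ^ p * f A)
    (u : EuclideanSpace ℝ (Fin n) → EuclideanSpace ℝ (Fin m))
    (K : ℝ≥0) (hu : LipschitzWith K u)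
    (hsupp : Function.support u ⊆ Metric.closedBall 0 1)
    (ρ : EuclideanSpace ℝ (Fin n)) (hρ : ‖ρ‖ = 1)
    (Ω : Set (EuclideanSpace ℝ (Fin n))) (hΩo : IsOpen Ω) (hΩb : Bornology.IsBounded Ω)
    (h0 : (0 : EuclideanSpace ℝ (Fin n)) ∈ frontier Ω)
    (hblow : Tendsto (fun j : ℕ =>
        volume (symmDiff ((fun x => (j : ℝ) • x) '' Ω) {x | ⟪x, ρ⟫ < 0} ∩ Metric.ball 0 1))
      atTop (nhds 0)) :
    Tendsto
      (fun j : ℕ => ∫ x in Ω,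
        f (grad (fun y => ((j : ℝ) ^ (((n : ℝ) - p) / p)) • u ((j : ℝ) • y)) x))
      atTop
      (nhds (∫ y in {x | ⟪x, ρ⟫ < 0} ∩ Metric.ball 0 1, f (grad u y))) := by
  have hp0 : (0:ℝ) < p := lt_of_lt_of_le one_pos hp
  set g : EuclideanSpace ℝ (Fin n) → ℝ := fun x => f (grad u x) with hg
  -- f 0 = 0
  have hf0 : f 0 = 0 := by
    have := hhom 0 le_rfl 0
    simpa [Real.zero_rpow hp0.ne'] using this
  have hgm : Measurable g := comp_grad_measurable f hfc u
  -- bound on g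
  obtain ⟨M, hM0, hM⟩ : ∃ M : ℝ, 0 ≤ M ∧ ∀ x, |g x| ≤ M := by
    set S : Set (Matrix (Fin m) (Fin n) ℝ) :=
      Set.univ.pi fun _ : Fin m => Set.univ.pi fun _ : Fin n => Set.Icc (-(K:ℝ)) K with hS
    have hScomp : IsCompact S :=
      isCompact_univ_pi fun _ => isCompact_univ_pi fun _ => isCompact_Icc
    obtain ⟨C, hC⟩ := hScomp.exists_bound_of_continuousOn hfc.continuousOn
    refine ⟨max C 0, le_max_right _ _, fun x => ?_⟩
    have hxS : grad u x ∈ S := by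
      rw [hS]; refine Set.mem_univ_pi.2 ?_
      intro i
      rw [Set.mem_univ_pi]
      intro j
      exact Set.mem_Icc.2 (abs_le.1 (grad_entry_bound hu x i j))
    calc |g x| ≤ C := hC _ hxS
      _ ≤ max C 0 := le_max_left _ _
  -- g vanishes outside the closed unit ball
  have hgz : ∀ x ∉ Metric.closedBall (0:EuclideanSpace ℝ (Fin n)) 1, g x = 0 := fun x hx => by
    have h := grad_zero_outside hsupp hx
    simp only [hg]
    rw [h, hf0]
  -- integrability on finite-measure sets
  have hgint : ∀ s : Set (EuclideanSpace ℝ (Fin n)), volume s < ∞ → IntegrableOn g s := fun s hsf =>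
    Measure.integrableOn_of_bounded hsf.ne hgm.aestronglyMeasurable
      (ae_of_all _ fun x => by simpa using hM x)
  set D : Set (EuclideanSpace ℝ (Fin n)) := {x | ⟪x, ρ⟫ < 0} with hD
  have hDo : IsOpen D := isOpen_lt (continuous_id.inner continuous_const) continuous_const
  set B : Set (EuclideanSpace ℝ (Fin n)) := Metric.ball 0 1 with hB
  have hBfin : volume B < ∞ := measure_ball_lt_top
  -- the key identity for j ≥ 1
  have key : ∀ j : ℕ, 1 ≤ j →
      (∫ x in Ω, f (grad (fun y => ((j:ℝ) ^ (((n:ℝ)-p)/p)) • u ((j:ℝ) • y)) x))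
        = ∫ y in ((fun x => (j:ℝ) • x) '' Ω) ∩ B, g y := by
    intro j hj
    have hjr : (0:ℝ) < (j:ℝ) := by exact_mod_cast hj
    set c : ℝ := (j:ℝ) ^ (((n:ℝ)-p)/p) with hc
    have hcpos : 0 < c := Real.rpow_pos_of_pos hjr _
    have step1 : ∀ x : EuclideanSpace ℝ (Fin n), f (grad (fun y => c • u ((j:ℝ) • y)) x)
        = (j:ℝ) ^ (n:ℕ) * g ((j:ℝ) • x) := by
      intro x
      rw [grad_scale u hcpos.ne' hjr.ne' x]
      have hcj : c * (j:ℝ) = (j:ℝ) ^ ((n:ℝ)/p) := by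
        rw [show ((n:ℝ)/p) = ((n:ℝ)-p)/p + 1 by field_simp; ring,
          Real.rpow_add hjr, Real.rpow_one]
      rw [hcj, hhom _ (Real.rpow_nonneg hjr.le _) _]
      congr 1
      rw [← Real.rpow_natCast (j:ℝ) n, ← Real.rpow_mul hjr.le, div_mul_cancel₀ _ hp0.ne']
    have himg : ((j:ℝ) • Ω : Set (EuclideanSpace ℝ (Fin n))) = (fun x => (j:ℝ) • x) '' Ω := by
      ext y; simp [Set.mem_smul_set]
    have hjΩmeas : MeasurableSet ((fun x => (j:ℝ) • x) '' Ω) := by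
      rw [← himg]; exact (hΩo.smul₀ hjr.ne').measurableSet
    calc (∫ x in Ω, f (grad (fun y => c • u ((j:ℝ) • y)) x))
        = ∫ x in Ω, (j:ℝ) ^ (n:ℕ) * g ((j:ℝ) • x) := by
          exact integral_congr_ae (ae_of_all _ fun x => step1 x)
      _ = (j:ℝ) ^ (n:ℕ) * ∫ x in Ω, g ((j:ℝ) • x) := by rw [integral_const_mul]
      _ = (j:ℝ) ^ (n:ℕ) * (((j:ℝ) ^ Module.finrank ℝ (EuclideanSpace ℝ (Fin n)))⁻¹ • ∫ y in (j:ℝ) • Ω, g y) := by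
          rw [Measure.setIntegral_comp_smul_of_pos volume g Ω hjr]
      _ = ∫ y in (fun x => (j:ℝ) • x) '' Ω, g y := by
          rw [himg, smul_eq_mul, finrank_euclideanSpace_fin, ← mul_assoc,
            mul_inv_cancel₀ (by positivity), one_mul]
      _ = ∫ y in ((fun x => (j:ℝ) • x) '' Ω) ∩ Metric.closedBall 0 1, g y := by
          rw [← setIntegral_indicator measurableSet_closedBall]
          refine integral_congr_ae (ae_of_all _ fun x => ?_)
          by_cases hx : x ∈ Metric.closedBall (0:EuclideanSpace ℝ (Fin n)) 1
          · simp [Set.indicator_of_mem hx]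
          · simp [Set.indicator_of_notMem hx, hgz x hx]
      _ = ∫ y in ((fun x => (j:ℝ) • x) '' Ω) ∩ B, g y := by
          apply setIntegral_congr_set
          refine Filter.EventuallyEq.inter (Filter.EventuallyEq.refl _ _) ?_
          have hs : volume (Metric.sphere (0:EuclideanSpace ℝ (Fin n)) 1) = 0 :=
            Measure.addHaar_sphere_of_ne_zero volume 0 one_ne_zero
          rw [MeasureTheory.ae_eq_set]
          constructor
          · rw [show Metric.closedBall (0:EuclideanSpace ℝ (Fin n)) 1 \ B = Metric.sphere 0 1 from
              Metric.closedBall_diff_ball]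
            exact hs
          · simp [hB, Set.diff_eq_empty.2 Metric.ball_subset_closedBall]
  -- notation
  set A : Set (EuclideanSpace ℝ (Fin n)) := D ∩ B with hA
  have hAmeas : MeasurableSet A := (hDo.inter Metric.isOpen_ball).measurableSet
  have hAfin : volume A < ∞ := lt_of_le_of_lt (measure_mono Set.inter_subset_right) hBfin
  set I : ℝ := ∫ y in A, g y with hI
  -- error bound for j ≥ 1
  have hbd : ∀ j : ℕ, 1 ≤ j →
      ‖(∫ y in ((fun x => (j:ℝ) • x) '' Ω) ∩ B, g y) - I‖
        ≤ 2 * M * (volume (symmDiff ((fun x => (j:ℝ) • x) '' Ω) D ∩ B)).toReal := by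
    intro j hj
    have hjr : (0:ℝ) < (j:ℝ) := by exact_mod_cast hj
    set S : Set (EuclideanSpace ℝ (Fin n)) := (fun x => (j:ℝ) • x) '' Ω with hSdef
    have hSmeas : MeasurableSet S := by
      have : ((j:ℝ) • Ω : Set (EuclideanSpace ℝ (Fin n))) = S := by
        ext y; simp [hSdef, Set.mem_smul_set]
      rw [← this]; exact (hΩo.smul₀ hjr.ne').measurableSet
    set Aj : Set (EuclideanSpace ℝ (Fin n)) := S ∩ B with hAj
    have hAjmeas : MeasurableSet Aj := hSmeas.inter Metric.isOpen_ball.measurableSet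
    have hAjfin : volume Aj < ∞ := lt_of_le_of_lt (measure_mono Set.inter_subset_right) hBfin
    have hsub1 : Aj \ A ⊆ symmDiff S D ∩ B := by
      intro x hx
      refine ⟨Or.inl ⟨hx.1.1, fun hxD => hx.2 ⟨hxD, hx.1.2⟩⟩, hx.1.2⟩
    have hsub2 : A \ Aj ⊆ symmDiff S D ∩ B := by
      intro x hx
      refine ⟨Or.inr ⟨hx.1.1, fun hxS => hx.2 ⟨hxS, hx.1.2⟩⟩, hx.1.2⟩
    have hsdfin : volume (symmDiff S D ∩ B) < ∞ :=
      lt_of_le_of_lt (measure_mono Set.inter_subset_right) hBfin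
    have hsplit1 : (∫ y in Aj, g y) = (∫ y in Aj ∩ A, g y) + ∫ y in Aj \ A, g y :=
      (integral_inter_add_diff hAmeas (hgint Aj hAjfin)).symm
    have hsplit2 : I = (∫ y in A ∩ Aj, g y) + ∫ y in A \ Aj, g y :=
      (integral_inter_add_diff hAjmeas (hgint A hAfin)).symm
    have hAc : Aj ∩ A = A ∩ Aj := Set.inter_comm _ _
    have hdiff : (∫ y in Aj, g y) - I = (∫ y in Aj \ A, g y) - ∫ y in A \ Aj, g y := by
      rw [hsplit1, hsplit2, hAc]; ring
    have hb1 : ‖∫ y in Aj \ A, g y‖ ≤ M * (volume (symmDiff S D ∩ B)).toReal := by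
      refine le_trans (norm_setIntegral_le_of_norm_le_const
        (lt_of_le_of_lt (measure_mono hsub1) hsdfin) (fun x _ => by rw [Real.norm_eq_abs]; exact hM x)) ?_
      exact mul_le_mul_of_nonneg_left
        (ENNReal.toReal_mono hsdfin.ne (measure_mono hsub1)) hM0
    have hb2 : ‖∫ y in A \ Aj, g y‖ ≤ M * (volume (symmDiff S D ∩ B)).toReal := by
      refine le_trans (norm_setIntegral_le_of_norm_le_const
        (lt_of_le_of_lt (measure_mono hsub2) hsdfin) (fun x _ => by rw [Real.norm_eq_abs]; exact hM x)) ?_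
      exact mul_le_mul_of_nonneg_left
        (ENNReal.toReal_mono hsdfin.ne (measure_mono hsub2)) hM0
    calc ‖(∫ y in Aj, g y) - I‖
        ≤ ‖∫ y in Aj \ A, g y‖ + ‖∫ y in A \ Aj, g y‖ := by
          rw [hdiff]; exact norm_sub_le _ _
      _ ≤ M * (volume (symmDiff S D ∩ B)).toReal + M * (volume (symmDiff S D ∩ B)).toReal :=
          add_le_add hb1 hb2
      _ = 2 * M * (volume (symmDiff S D ∩ B)).toReal := by ring
  -- the error tends to zero
  have herr : Tendsto (fun j : ℕ =>
      2 * M * (volume (symmDiff ((fun x => (j:ℝ) • x) '' Ω) D ∩ B)).toReal) atTop (𝓝 0) := by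
    have h1 : Tendsto (fun j : ℕ =>
        (volume (symmDiff ((fun x => (j:ℝ) • x) '' Ω) D ∩ B)).toReal) atTop (𝓝 0) := by
      have := (ENNReal.tendsto_toReal (ENNReal.zero_ne_top)).comp hblow
      rw [ENNReal.toReal_zero] at this; exact this
    simpa using h1.const_mul (2 * M)
  -- conclude
  have hzero : Tendsto (fun j : ℕ =>
      (∫ x in Ω, f (grad (fun y => ((j:ℝ) ^ (((n:ℝ)-p)/p)) • u ((j:ℝ) • y)) x)) - I)
      atTop (𝓝 0) := by
    apply squeeze_zero_norm' _ herr
    filter_upwards [eventually_ge_atTop 1] with j hj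
    rw [key j hj]
    exact hbd j hj
  have := hzero.add (tendsto_const_nhds (x := I))
  simpa using this
end
end

section
/- Let p > 1 and let f : ℝ^{m×n} → ℝ be continuous and positively p-homogeneous, i.e., f(tA) = t^p f(A) for all t ≥ 0 and A ∈ ℝ^{m×n}. Let ρ ∈ ℝⁿ be a unit vector, let D_ρ := {x ∈ B(0,1) : x·ρ < 0} be the unit half-ball and Γ_ρ := {x ∈ B(0,1) : x·ρ = 0} the planar part of its boundary, and call φ admissible if φ : ℝⁿ → ℝ^m is Lipschitz and vanishes on ∂D_ρ ∖ Γ_ρ (the spherical part of the boundary). Suppose there exists q ∈ ℝ^m such that for every admissible φ: ∫_{Γ_ρ} q·φ(x) dH^{n−1}(x) + f(0)·|D_ρ| ≤ ∫_{D_ρ} f(∇φ(x)) dx. Then ∫_{D_ρ} f(∇φ(x)) dx ≥ 0 for every admissible φ; i.e., the quasiconvexity-at-the-boundary inequality holds with q = 0. -/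
open MeasureTheory Filter Topology Metric Bornology
open scoped ENNReal NNReal RealInnerProductSpace

noncomputable section

/-- For a continuous, positively `p`-homogeneous `f` (`p > 1`) that is quasiconvex at the
boundary at `0` with respect to the unit normal `ρ` — i.e. there is `q ∈ ℝᵐ` with
`∫_{Γ_ρ} q·φ dH^{n−1} + f(0)|D_ρ| ≤ ∫_{D_ρ} f(∇φ)` for every Lipschitz `φ` vanishing on the
spherical part `∂D_ρ ∖ Γ_ρ` of the boundary of the half-ball `D_ρ` — the inequality holds
with `q = 0`: `∫_{D_ρ} f(∇φ) ≥ 0` for every such admissible `φ`. -/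
theorem stmt16 {m n : ℕ} (p : ℝ) (hp : 1 < p)
    (f : Matrix (Fin m) (Fin n) ℝ → ℝ) (hfc : Continuous f)
    (hhom : ∀ t : ℝ, 0 ≤ t → ∀ A, f (t • A) = t ^ p * f A)
    (ρ : EuclideanSpace ℝ (Fin n)) (hρ : ‖ρ‖ = 1)
    (D Γ : Set (EuclideanSpace ℝ (Fin n)))
    (hD : D = {x | x ∈ Metric.ball (0 : EuclideanSpace ℝ (Fin n)) 1 ∧ ⟪x, ρ⟫ < 0})
    (hΓ : Γ = {x | x ∈ Metric.ball (0 : EuclideanSpace ℝ (Fin n)) 1 ∧ ⟪x, ρ⟫ = 0})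
    (q : EuclideanSpace ℝ (Fin m))
    (hq : ∀ φ : EuclideanSpace ℝ (Fin n) → EuclideanSpace ℝ (Fin m),
      (∃ K : ℝ≥0, LipschitzWith K φ) → (∀ x ∈ frontier D \ Γ, φ x = 0) →
        (∫ x in Γ, ⟪q, φ x⟫ ∂(MeasureTheory.Measure.hausdorffMeasure ((n : ℝ) - 1))) +
            f 0 * (volume D).toReal ≤
          ∫ x in D, f (grad φ x)) :
    ∀ φ : EuclideanSpace ℝ (Fin n) → EuclideanSpace ℝ (Fin m),
      (∃ K : ℝ≥0, LipschitzWith K φ) → (∀ x ∈ frontier D \ Γ, φ x = 0) →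
        0 ≤ ∫ x in D, f (grad φ x) := by
  intro φ hlip hbd
  by_contra hneg
  push_neg at hneg
  set I := ∫ x in D, f (grad φ x) with hI
  have hf0 : f 0 = 0 := by
    have h := hhom 0 le_rfl 0
    rw [zero_smul, Real.zero_rpow (by linarith : p ≠ 0), zero_mul] at h
    exact h
  set c := ∫ x in Γ, ⟪q, φ x⟫ ∂(MeasureTheory.Measure.hausdorffMeasure ((n : ℝ) - 1)) with hc
  have key : ∀ t : ℝ, 0 < t → c ≤ t ^ (p - 1) * I := by
    intro t ht
    obtain ⟨K, hK⟩ := hlip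
    have hlip' : ∃ K : ℝ≥0, LipschitzWith K (fun x => t • φ x) :=
      ⟨‖t‖₊ * K, (lipschitzWith_smul t).comp hK⟩
    have hbd' : ∀ x ∈ frontier D \ Γ, (fun x => t • φ x) x = 0 := by
      intro x hx; simp [hbd x hx]
    have hgrad : ∀ x, grad (fun y => t • φ y) x = t • grad φ x := by
      intro x
      have hfd : fderiv ℝ (fun y => t • φ y) x = t • fderiv ℝ φ x := by
        by_cases hdx : DifferentiableAt ℝ φ x
        · exact fderiv_const_smul hdx t
        · have hnd : ¬ DifferentiableAt ℝ (fun y => t • φ y) x := by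
            intro hd
            have h2 := hd.fun_const_smul t⁻¹
            simp only [smul_smul, inv_mul_cancel₀ ht.ne', one_smul] at h2
            exact hdx h2
          rw [fderiv_zero_of_not_differentiableAt hdx,
              fderiv_zero_of_not_differentiableAt hnd]
          exact (smul_zero (A := EuclideanSpace ℝ (Fin n) →L[ℝ] EuclideanSpace ℝ (Fin m)) t).symm
      ext i j
      simp [grad, hfd]
    have h := hq _ hlip' hbd'
    simp only [hf0, zero_mul, add_zero] at h
    have hL : (∫ x in Γ, ⟪q, t • φ x⟫ ∂(MeasureTheory.Measure.hausdorffMeasure ((n : ℝ) - 1)))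
        = t * c := by
      rw [hc, ← integral_const_mul]
      congr 1
      ext x
      rw [real_inner_smul_right]
    have hR : (∫ x in D, f (grad (fun y => t • φ y) x)) = t ^ p * I := by
      rw [hI, ← integral_const_mul]
      congr 1
      ext x
      rw [hgrad x, hhom t ht.le]
    rw [hL, hR] at h
    have hpow : t ^ p = t * t ^ (p - 1) := by
      have h2 := Real.rpow_add ht 1 (p - 1)
      rw [show (1 : ℝ) + (p - 1) = p by ring, Real.rpow_one] at h2
      exact h2
    rw [hpow, mul_assoc] at h
    exact le_of_mul_le_mul_left h ht
  have h1 : Tendsto (fun t : ℝ => t ^ (p - 1) * I) atTop atBot :=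
    Tendsto.atTop_mul_const_of_neg hneg (tendsto_rpow_atTop (by linarith))
  obtain ⟨t, htc, ht0⟩ := ((h1.eventually (eventually_lt_atBot c)).and (eventually_gt_atTop 0)).exists
  exact absurd (key t ht0) (not_le.mpr htc)
end
end
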